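/- arXiv:1508.00991 — 5 statements merged into one kernel-verified Lean document; each statement's English description precedes it below -/
import Mathlib

section
/- Let Φ : (0,∞) → (0,∞) be an operator monotone function with Φ(1) = 1, and let w ∈ (0,1). If Φ'(1) = w, then for all t > 0 we have ((1-w) + w·t⁻¹)⁻¹ ≤ Φ(t) ≤ (1-w) + w·t. -/
open Matrix
open scoped ComplexOrder


noncomputable def M2 (a b c d : ℝ) : Matrix (Fin 2) (Fin 2) ℂ := !![(a:ℂ), b; c, d]

lemma M2_selfadj (a b d : ℝ) : _root_.IsSelfAdjoint (M2 a b b d) := by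
  rw [_root_.IsSelfAdjoint, star_eq_conjTranspose]
  ext i j
  fin_cases i <;> fin_cases j <;> simp [M2]

lemma quad_eval (a b c d : ℝ) (v : Fin 2 → ℂ) :
    star v ⬝ᵥ (M2 a b c d) *ᵥ v =
      a * (starRingEnd ℂ (v 0) * v 0) + b * (starRingEnd ℂ (v 0) * v 1)
      + c * (starRingEnd ℂ (v 1) * v 0) + d * (starRingEnd ℂ (v 1) * v 1) := by
  simp only [M2, dotProduct, mulVec, Fin.sum_univ_two, Matrix.cons_val', Matrix.cons_val_zero,
    Matrix.cons_val_one, Matrix.head_cons, Matrix.head_fin_const, Matrix.of_apply, Pi.star_apply,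
    RCLike.star_def, Matrix.cons_val_fin_one, Matrix.empty_val']
  ring

lemma key_real (a b d p q r s : ℝ) (ha : 0 ≤ a) (hd : 0 ≤ d) (hdet : b^2 ≤ a*d) :
    0 ≤ a*(p^2+q^2) + 2*b*(p*r+q*s) + d*(r^2+s^2) := by
  rcases eq_or_lt_of_le ha with h|h
  · have hb : b = 0 := by nlinarith
    subst hb
    nlinarith [sq_nonneg r, sq_nonneg s, sq_nonneg p, sq_nonneg q]
  · nlinarith [sq_nonneg (a*p + b*r), sq_nonneg (a*q + b*s),
      mul_nonneg (sub_nonneg.mpr hdet) (add_nonneg (sq_nonneg r) (sq_nonneg s))]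

lemma key_pos (a b d p q r s : ℝ) (ha : 0 < a) (hdet : b^2 < a*d)
    (hv : 0 < p^2+q^2 ∨ 0 < r^2+s^2) :
    0 < a*(p^2+q^2) + 2*b*(p*r+q*s) + d*(r^2+s^2) := by
  rcases eq_or_lt_of_le (add_nonneg (sq_nonneg r) (sq_nonneg s)) with h|h
  · have hr : r = 0 := by nlinarith
    have hs : s = 0 := by nlinarith
    subst hr; subst hs
    have hpq : 0 < p^2+q^2 := by rcases hv with h'|h'; exacts [h', by nlinarith]
    nlinarith
  · have h2 : 0 < a * (a*(p^2+q^2) + 2*b*(p*r+q*s) + d*(r^2+s^2)) := by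
      nlinarith [sq_nonneg (a*p + b*r), sq_nonneg (a*q + b*s),
        mul_pos (sub_pos.mpr hdet) h]
    by_contra h3
    push_neg at h3
    nlinarith [mul_nonpos_of_nonneg_of_nonpos (le_of_lt ha) h3]

lemma quad_real (a b d : ℝ) (v : Fin 2 → ℂ) :
    star v ⬝ᵥ (M2 a b b d) *ᵥ v =
      ((a * ((v 0).re^2+(v 0).im^2) + 2*b*((v 0).re*(v 1).re + (v 0).im*(v 1).im)
        + d * ((v 1).re^2+(v 1).im^2) : ℝ) : ℂ) := by
  rw [quad_eval]
  rw [Complex.ext_iff]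
  constructor <;>
    simp [Complex.mul_re, Complex.mul_im, Complex.conj_re, Complex.conj_im,
      Complex.add_re, Complex.add_im, Complex.ofReal_re, Complex.ofReal_im, pow_two] <;> ring

lemma psd2 (a b d : ℝ) (ha : 0 ≤ a) (hd : 0 ≤ d) (hdet : b^2 ≤ a*d) :
    (M2 a b b d).PosSemidef := by
  refine .of_dotProduct_mulVec_nonneg (M2_selfadj a b d) fun v => ?_
  rw [quad_real, Complex.zero_le_real]
  exact key_real a b d _ _ _ _ ha hd hdet

lemma posdef2 (a b d : ℝ) (ha : 0 < a) (hdet : b^2 < a*d) :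
    (M2 a b b d).PosDef := by
  refine .of_dotProduct_mulVec_pos (M2_selfadj a b d) fun v hv => ?_
  rw [quad_real, Complex.zero_lt_real]
  have h01 : v 0 ≠ 0 ∨ v 1 ≠ 0 := by
    by_contra hc
    push_neg at hc
    exact hv (funext fun j => by fin_cases j <;> simp [hc.1, hc.2])
  apply key_pos a b d _ _ _ _ ha hdet
  rcases h01 with h|h
  · left
    have := Complex.normSq_pos.mpr h
    rw [Complex.normSq_apply] at this
    nlinarith
  · right
    have := Complex.normSq_pos.mpr h
    rw [Complex.normSq_apply] at this
    nlinarith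
lemma spec_M2 (a b d p q : ℝ)
    (h : ∀ r : ℝ, r ≠ p → r ≠ q → (r-a)*(r-d) - b*b ≠ 0) :
    spectrum ℝ (M2 a b b d) ⊆ {p, q} := by
  intro r hr
  rw [spectrum.mem_iff] at hr
  by_contra hrpq
  simp only [Set.mem_insert_iff, Set.mem_singleton_iff, not_or] at hrpq
  apply hr
  rw [Matrix.isUnit_iff_isUnit_det, isUnit_iff_ne_zero]
  have halg : (algebraMap ℝ (Matrix (Fin 2) (Fin 2) ℂ) r) - M2 a b b d
      = !![((r - a : ℝ) : ℂ), ((-b : ℝ) : ℂ); ((-b : ℝ) : ℂ), ((r - d : ℝ) : ℂ)] := by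
    rw [Matrix.algebraMap_eq_diagonal]
    ext i j
    fin_cases i <;> fin_cases j <;> simp [M2] <;> push_cast <;> ring
  rw [halg, det_fin_two_of]
  have : ((r - a : ℝ) : ℂ) * ((r - d : ℝ) : ℂ) - ((-b : ℝ) : ℂ) * ((-b : ℝ) : ℂ)
      = (((r-a)*(r-d) - b*b : ℝ) : ℂ) := by push_cast; ring
  rw [this]
  simp only [ne_eq, Complex.ofReal_eq_zero]
  exact h r hrpq.1 hrpq.2

lemma cfc_lin {n : ℕ} (f : ℝ → ℝ) (M : Matrix (Fin n) (Fin n) ℂ) (hM : _root_.IsSelfAdjoint M)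
    (c₀ c₁ : ℝ) (hf : ∀ t ∈ spectrum ℝ M, f t = c₀ + c₁ * t) :
    cfc f M = algebraMap ℝ _ c₀ + c₁ • M := by
  rw [cfc_congr hf]
  rw [cfc_add M (fun _ => c₀) (fun t => c₁ * t), cfc_const c₀ M hM,
    cfc_const_mul c₁ (fun t : ℝ => t) M, cfc_id' ℝ M hM]

lemma M2_selfadj' (a b d : ℝ) : _root_.IsSelfAdjoint (M2 a b b d) := by
  rw [_root_.IsSelfAdjoint, star_eq_conjTranspose]
  ext i j
  fin_cases i <;> fin_cases j <;> simp [M2]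

lemma lin_M2 (e c a b d : ℝ) :
    algebraMap ℝ (Matrix (Fin 2) (Fin 2) ℂ) e + c • M2 a b b d
      = M2 (e + c*a) (c*b) (c*b) (e + c*d) := by
  rw [Matrix.algebraMap_eq_diagonal]
  ext i j
  fin_cases i <;> fin_cases j <;> simp [M2, Complex.real_smul] <;> push_cast <;> ring

lemma cfc_M2 (f : ℝ → ℝ) (a b d p q : ℝ) (hpq : p ≠ q)
    (hspec : spectrum ℝ (M2 a b b d) ⊆ {p, q}) :
    cfc f (M2 a b b d) =
      M2 ((f p - (f p - f q)/(p-q)*p) + (f p - f q)/(p-q)*a) ((f p - f q)/(p-q)*b)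
         ((f p - f q)/(p-q)*b) ((f p - (f p - f q)/(p-q)*p) + (f p - f q)/(p-q)*d) := by
  rw [← lin_M2]
  apply cfc_lin f _ (M2_selfadj' a b d)
  intro t ht
  have hpq' : p - q ≠ 0 := sub_ne_zero.mpr hpq
  rcases hspec ht with h|h
  · subst h
    field_simp
    ring
  · rw [Set.mem_singleton_iff] at h
    subst h
    field_simp
    ring

lemma sub_M2 (a b d a' b' d' : ℝ) :
    M2 a b b d - M2 a' b' b' d' = M2 (a-a') (b-b') (b-b') (d-d') := by
  ext i j
  fin_cases i <;> fin_cases j <;> simp [M2] <;> push_cast <;> ring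

lemma psd_quad (p q s c : ℝ) (h : (M2 p q q s).PosSemidef) : 0 ≤ p + 2*c*q + c^2*s := by
  have h2 := h.dotProduct_mulVec_nonneg ![1, (c:ℂ)]
  rw [quad_real] at h2
  simp only [Matrix.cons_val_zero, Matrix.cons_val_one, Matrix.head_cons,
    Complex.one_re, Complex.one_im, Complex.ofReal_re, Complex.ofReal_im] at h2
  rw [Complex.zero_le_real] at h2
  nlinarith [h2]

/-- `f` is operator monotone on `(0,∞)`: it preserves the Loewner order
on positive definite complex matrices of every size. -/
def OperatorMonotoneOn' (f : ℝ → ℝ) : Prop :=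
  ∀ (n : ℕ) (A B : Matrix (Fin n) (Fin n) ℂ), A.PosDef → B.PosDef →
    (B - A).PosSemidef → (cfc f B - cfc f A).PosSemidef

lemma mono_of_OM (f : ℝ → ℝ) (hm : OperatorMonotoneOn' f) :
    ∀ s t : ℝ, 0 < s → s < t → f s ≤ f t := by
  intro s t hs hst
  set c := s/2 with hc
  have hcs : c ≠ s := by simp only [hc]; intro h; linarith [h]
  have hct : c ≠ t := by simp only [hc]; intro h; linarith [h]
  have hA : (M2 s 0 0 c).PosDef := posdef2 _ _ _ hs (by nlinarith)
  have hB : (M2 t 0 0 c).PosDef := posdef2 _ _ _ (by linarith) (by nlinarith)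
  have hBA : (M2 t 0 0 c - M2 s 0 0 c).PosSemidef := by
    rw [sub_M2]
    exact psd2 _ _ _ (by linarith) (by norm_num) (by nlinarith)
  have key := hm 2 _ _ hA hB hBA
  have hsA : spectrum ℝ (M2 s 0 0 c) ⊆ {s, c} := by
    apply spec_M2
    intro r h1 h2
    have : (r-s)*(r-c) - 0*0 = (r-s)*(r-c) := by ring
    rw [this]
    exact mul_ne_zero (sub_ne_zero.mpr h1) (sub_ne_zero.mpr h2)
  have hsB : spectrum ℝ (M2 t 0 0 c) ⊆ {t, c} := by
    apply spec_M2
    intro r h1 h2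
    have : (r-t)*(r-c) - 0*0 = (r-t)*(r-c) := by ring
    rw [this]
    exact mul_ne_zero (sub_ne_zero.mpr h1) (sub_ne_zero.mpr h2)
  have hcfA : cfc f (M2 s 0 0 c) = M2 (f s) 0 0 (f c) := by
    rw [cfc_M2 f s 0 c s c (Ne.symm hcs) hsA]
    have hsc : s - c ≠ 0 := sub_ne_zero.mpr (Ne.symm hcs)
    have e1 : (f s - (f s - f c)/(s-c)*s) + (f s - f c)/(s-c)*s = f s := by ring
    have e2 : (f s - f c)/(s-c)*0 = 0 := by ring
    have e3 : (f s - (f s - f c)/(s-c)*s) + (f s - f c)/(s-c)*c = f c := by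
      field_simp
      ring
    rw [e1, e2, e3]
  have hcfB : cfc f (M2 t 0 0 c) = M2 (f t) 0 0 (f c) := by
    rw [cfc_M2 f t 0 c t c (Ne.symm hct) hsB]
    have htc : t - c ≠ 0 := sub_ne_zero.mpr (Ne.symm hct)
    have e1 : (f t - (f t - f c)/(t-c)*t) + (f t - f c)/(t-c)*t = f t := by ring
    have e2 : (f t - f c)/(t-c)*0 = 0 := by ring
    have e3 : (f t - (f t - f c)/(t-c)*t) + (f t - f c)/(t-c)*c = f c := by
      field_simp
      ring
    rw [e1, e2, e3]
  rw [hcfA, hcfB, sub_M2] at key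
  have := psd_quad _ _ _ 0 key
  nlinarith [this]

lemma spec_X (x y : ℝ) :
    spectrum ℝ (M2 ((x+y)/2) ((x-y)/2) ((x-y)/2) ((x+y)/2)) ⊆ {x, y} := by
  apply spec_M2
  intro r h1 h2
  have : (r-(x+y)/2)*(r-(x+y)/2) - (x-y)/2*((x-y)/2) = (r-x)*(r-y) := by ring
  rw [this]
  exact mul_ne_zero (sub_ne_zero.mpr h1) (sub_ne_zero.mpr h2)

lemma cfc_X (f : ℝ → ℝ) (x y : ℝ) (hxy : x ≠ y) :
    cfc f (M2 ((x+y)/2) ((x-y)/2) ((x-y)/2) ((x+y)/2))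
      = M2 ((f x + f y)/2) ((f x - f y)/2) ((f x - f y)/2) ((f x + f y)/2) := by
  rw [cfc_M2 f _ _ _ x y hxy (spec_X x y)]
  have hxy' : x - y ≠ 0 := sub_ne_zero.mpr hxy
  have e1 : (f x - (f x - f y)/(x-y)*x) + (f x - f y)/(x-y)*((x+y)/2) = (f x + f y)/2 := by
    field_simp
    ring
  have e2 : (f x - f y)/(x-y)*((x-y)/2) = (f x - f y)/2 := by
    field_simp
  rw [e1, e2]

lemma spec_Dg (a b : ℝ) : spectrum ℝ (M2 a 0 0 b) ⊆ {a, b} := by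
  apply spec_M2
  intro r h1 h2
  have : (r-a)*(r-b) - 0*0 = (r-a)*(r-b) := by ring
  rw [this]
  exact mul_ne_zero (sub_ne_zero.mpr h1) (sub_ne_zero.mpr h2)

lemma cfc_Dg (f : ℝ → ℝ) (a b : ℝ) (hab : a ≠ b) :
    cfc f (M2 a 0 0 b) = M2 (f a) 0 0 (f b) := by
  rw [cfc_M2 f a 0 b a b hab (spec_Dg a b)]
  have hab' : a - b ≠ 0 := sub_ne_zero.mpr hab
  have e1 : (f a - (f a - f b)/(a-b)*a) + (f a - f b)/(a-b)*a = f a := by ring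
  have e2 : (f a - f b)/(a-b)*0 = 0 := by ring
  have e3 : (f a - (f a - f b)/(a-b)*a) + (f a - f b)/(a-b)*b = f b := by
    field_simp
    ring
  rw [e1, e2, e3]

lemma amean_of_OM (f : ℝ → ℝ) (hm : OperatorMonotoneOn' f) :
    ∀ a b δ : ℝ, 0 < a → 0 < b → 0 < δ → (f a + f b)/2 ≤ f ((a+b)/2 + δ) := by
  intro a b δ ha hb hδ
  rcases eq_or_ne a b with rfl|hab
  · have : (a+a)/2 + δ = a + δ := by ring
    rw [this]
    have := mono_of_OM f hm a (a + δ) ha (by linarith)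
    linarith
  · set C := (a+b)/2 with hC
    set D := (a-b)/2 with hD
    set R := C + D^2/δ + C + δ + 1 with hR
    have hC0 : 0 < C := by simp only [hC]; linarith
    have hRC : 0 < R - C - δ := by
      have : 0 ≤ D^2/δ := div_nonneg (sq_nonneg D) (le_of_lt hδ)
      simp only [hR]; linarith
    have hA : (M2 C D D C).PosDef := by
      apply posdef2 _ _ _ hC0
      simp only [hC, hD]; nlinarith
    have hB : (M2 (C+δ) 0 0 R).PosDef := by
      apply posdef2 _ _ _ (by linarith)
      have : 0 < R := by linarith
      nlinarith
    have hBA : (M2 (C+δ) 0 0 R - M2 C D D C).PosSemidef := by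
      rw [sub_M2]
      apply psd2 _ _ _ (by linarith) (by linarith)
      have h2 : δ*(R-C) = D^2 + δ*(C+δ+1) := by
        simp only [hR]
        field_simp
        ring
      nlinarith [h2, mul_pos hδ (show (0:ℝ) < C + δ + 1 by linarith)]
    have key := hm 2 _ _ hA hB hBA
    rw [cfc_X f a b hab, cfc_Dg f (C+δ) R (by intro h; rw [← h] at hRC; linarith), sub_M2] at key
    have := psd_quad _ _ _ 0 key
    nlinarith [this]

lemma hmean_of_OM (f : ℝ → ℝ) (hm : OperatorMonotoneOn' f) (hpos : ∀ t > (0:ℝ), 0 < f t) :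
    ∀ x y z : ℝ, 0 < x → 0 < y → 0 < z → z < 2*x*y/(x+y) →
      f z ≤ 2*(f x * f y)/(f x + f y) := by
  intro x y z hx hy hz hzH
  have hfx := hpos x hx
  have hfy := hpos y hy
  rcases eq_or_ne x y with rfl|hxy
  · have hH : 2*x*x/(x+x) = x := by field_simp; ring
    rw [hH] at hzH
    have h1 := mono_of_OM f hm z x hz hzH
    have h2 : 2*(f x * f x)/(f x + f x) = f x := by
      field_simp
      ring
    rw [h2]
    exact h1
  · set C := (x+y)/2 with hC
    set D := (x-y)/2 with hD
    set H := 2*x*y/(x+y) with hH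
    have hxy0 : 0 < x + y := by linarith
    have hCH : C*H = x*y := by simp only [hC, hH]; field_simp
    have hH0 : 0 < H := by simp only [hH]; positivity
    have hC0 : 0 < C := by simp only [hC]; linarith
    have hD2 : D^2 = C^2 - x*y := by simp only [hC, hD]; ring
    have hHC : H ≤ C := by nlinarith [sq_nonneg D, hD2, hCH]
    have hzC : z < C := lt_of_lt_of_le hzH hHC
    set r := min (C*(H-z)/(C-z)) (z/2) with hr
    have hr0 : 0 < r := by
      apply lt_min
      · apply div_pos (mul_pos hC0 (by linarith)) (by linarith)
      · linarith
    have hrz : r < z := lt_of_le_of_lt (min_le_right _ _) (by linarith)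
    have hrkey : (C-z)*r ≤ C*(H-z) := by
      have h1 : r ≤ C*(H-z)/(C-z) := min_le_left _ _
      have h2 : 0 < C - z := by linarith
      calc (C-z)*r ≤ (C-z)*(C*(H-z)/(C-z)) := by
            exact mul_le_mul_of_nonneg_left h1 (le_of_lt h2)
        _ = C*(H-z) := by field_simp
    have hA : (M2 z 0 0 r).PosDef := posdef2 _ _ _ hz (by nlinarith)
    have hB : (M2 C D D C).PosDef := by
      apply posdef2 _ _ _ hC0
      nlinarith [hD2, mul_pos hx hy]
    have hBA : (M2 C D D C - M2 z 0 0 r).PosSemidef := by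
      rw [sub_M2]
      apply psd2 _ _ _ (by linarith) (by linarith)
      have : (D-0)^2 = C^2 - x*y := by rw [sub_zero]; exact hD2
      nlinarith [hrkey, hCH, hD2]
    have key := hm 2 _ _ hA hB hBA
    rw [cfc_X f x y hxy, cfc_Dg f z r (ne_of_lt hrz).symm, sub_M2] at key
    set P := (f x + f y)/2 with hP
    set Q := (f x - f y)/2 with hQ
    have hP0 : 0 < P := by simp only [hP]; linarith
    have hfr : 0 < f r := hpos r hr0
    have hquad := psd_quad _ _ _ (-(Q/P)) key
    have hexp : (P - f z) + 2*(-(Q/P))*(Q - 0) + (-(Q/P))^2*(P - f r)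
        = P - f z - 2*(Q^2/P) + (Q^2/P - Q^2/P^2*(f r)) := by
      field_simp
      ring
    rw [hexp] at hquad
    have h3 : f z ≤ P - Q^2/P - Q^2/P^2*(f r) := by linarith
    have hfrQ : 0 ≤ Q^2/P^2 * f r := by positivity
    have h4 : f z ≤ P - Q^2/P := by linarith
    have h5 : P - Q^2/P = (P^2 - Q^2)/P := by field_simp
    have h6 : P^2 - Q^2 = f x * f y := by simp only [hP, hQ]; ring
    rw [h5, h6] at h4
    have h7 : f z * P ≤ f x * f y := by
      have := (le_div_iff₀ hP0).mp h4
      linarith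
    simp only [hP] at h7
    rw [le_div_iff₀ (by linarith : (0:ℝ) < f x + f y)]
    linarith

lemma slope_ctrl (f : ℝ → ℝ) (w : ℝ) (hd : HasDerivAt f w 1) (ε : ℝ) (hε : 0 < ε) :
    ∃ ρ > (0:ℝ), ∀ v : ℝ, v ≠ 1 → |v - 1| < ρ → |(f v - f 1)/(v - 1) - w| < ε := by
  have h := hasDerivAt_iff_tendsto_slope.mp hd
  rw [Metric.tendsto_nhdsWithin_nhds] at h
  obtain ⟨ρ, hρ0, hρ⟩ := h ε hε
  refine ⟨ρ, hρ0, fun v hv1 hvρ => ?_⟩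
  have := hρ (x := v) (by simpa using hv1) (by simpa [Real.dist_eq] using hvρ)
  simpa [slope_def_field, Real.dist_eq] using this

lemma upper_bound (f : ℝ → ℝ)
    (ham : ∀ a b δ : ℝ, 0 < a → 0 < b → 0 < δ → (f a + f b)/2 ≤ f ((a+b)/2 + δ))
    (hf1 : f 1 = 1) (w : ℝ) (hd : HasDerivAt f w 1) :
    ∀ t > (0:ℝ), f t ≤ 1 + w*(t-1) := by
  intro t ht
  rcases lt_trichotomy t 1 with htlt|rfl|htgt
  · -- case t < 1 : show w*(1-t) ≤ 1 - f t
    suffices hS : ∀ ε > (0:ℝ), (w-ε)*(1-t) ≤ 1 - f t by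
      by_contra hcon
      push_neg at hcon
      have h1t : 0 < 1 - t := by linarith
      set ε := (w*(1-t) - (1 - f t))/(2*(1-t)) with hε
      have hε0 : 0 < ε := by
        apply div_pos _ (by linarith)
        nlinarith
      have := hS ε hε0
      rw [hε] at this
      have hexp : (w - (w*(1-t) - (1 - f t))/(2*(1-t)))*(1-t)
          = w*(1-t) - (w*(1-t) - (1 - f t))/2 := by
        field_simp
      rw [hexp] at this
      nlinarith
    intro ε hε
    obtain ⟨ρ, hρ0, hρ⟩ := slope_ctrl f w hd ε hε
    obtain ⟨n, hn⟩ := exists_pow_lt_of_lt_one (div_pos hρ0 (by linarith : (0:ℝ) < 1 - t))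
      (by norm_num : (3/4:ℝ) < 1)
    have hn' : (1-t) * (3/4:ℝ)^n < ρ := by
      have := (lt_div_iff₀' (by linarith : (0:ℝ) < 1 - t)).mp hn
      linarith
    suffices hcl : ∀ ε' : ℝ, 0 < ε' → ε' ≤ 1/2 → (w-ε)*(1-t)*(1-ε')^n ≤ 1 - f t by
      have hc : Continuous (fun ε' : ℝ => (w-ε)*(1-t)*(1-ε')^n) := by fun_prop
      have htend : Filter.Tendsto (fun ε' : ℝ => (w-ε)*(1-t)*(1-ε')^n)
          (nhdsWithin 0 (Set.Ioi 0)) (nhds ((w-ε)*(1-t))) := by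
        have h0 : Filter.Tendsto (fun ε' : ℝ => (w-ε)*(1-t)*(1-ε')^n)
            (nhdsWithin 0 (Set.Ioi 0)) (nhds ((w-ε)*(1-t)*(1-(0:ℝ))^n)) :=
          (hc.tendsto 0).mono_left nhdsWithin_le_nhds
        simpa using h0
      have hev : ∀ᶠ ε' in nhdsWithin (0:ℝ) (Set.Ioi 0),
          (w-ε)*(1-t)*(1-ε')^n ≤ 1 - f t := by
        apply Filter.eventually_of_mem (Ioc_mem_nhdsGT_of_mem
          (by norm_num : (0:ℝ) ∈ Set.Ico (0:ℝ) (1/2:ℝ)))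
        exact fun ε' hε' => hcl ε' hε'.1 hε'.2
      exact le_of_tendsto htend hev
    intro ε' hε'0 hε'half
    set q := (1-ε')/2 with hq
    have hq0 : 0 < q := by rw [hq]; linarith
    have hq34 : q ≤ 3/4 := by rw [hq]; linarith
    set u : ℕ → ℝ := fun k => 1 - (1-t)*q^k with hu
    have hposq : ∀ k : ℕ, 0 < (1-t)*q^k := fun k => mul_pos (by linarith) (pow_pos hq0 k)
    have hu_lt1 : ∀ k, u k < 1 := fun k => by
      simp only [hu]; linarith [hposq k]
    have hu_ge : ∀ k, t ≤ u k := fun k => by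
      simp only [hu]
      have h1 : q^k ≤ 1 := pow_le_one₀ (le_of_lt hq0) (by linarith)
      nlinarith
    have hstep : ∀ k, 1 - f (u (k+1)) ≤ (1 - f (u k))/2 := by
      intro k
      have hδ : 0 < (1 - u k)*ε'/2 := by
        have := hu_lt1 k
        have h2 : 0 < 1 - u k := by linarith
        positivity
      have hh := ham (u k) 1 ((1 - u k)*ε'/2) (by linarith [hu_ge k]) one_pos hδ
      have harg : (u k + 1)/2 + (1 - u k)*ε'/2 = u (k+1) := by
        simp only [hu, pow_succ, hq]; ring
      rw [harg, hf1] at hh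
      linarith
    have hind : ∀ k, (1 - f (u k)) * 2^k ≤ 1 - f t := by
      intro k
      induction k with
      | zero =>
        have hu0 : u 0 = t := by simp only [hu, pow_zero]; ring
        rw [hu0]; norm_num
      | succ k ih =>
        calc (1 - f (u (k+1)))*2^(k+1) ≤ ((1 - f (u k))/2)*2^(k+1) := by
              apply mul_le_mul_of_nonneg_right (hstep k) (by positivity)
          _ = (1 - f (u k))*2^k := by rw [pow_succ]; ring
          _ ≤ 1 - f t := ih
    have hv1 : u n < 1 := hu_lt1 n
    have hvdist : |u n - 1| < ρ := by
      have he : u n - 1 = -((1-t)*q^n) := by simp only [hu]; ring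
      rw [he, abs_neg, abs_of_pos (hposq n)]
      calc (1-t)*q^n ≤ (1-t)*(3/4:ℝ)^n := by
            apply mul_le_mul_of_nonneg_left (pow_le_pow_left₀ (le_of_lt hq0) hq34 n) (by linarith)
        _ < ρ := hn'
    have hslope := hρ (u n) (ne_of_lt hv1) hvdist
    rw [hf1] at hslope
    have habs := (abs_lt.mp hslope).1
    have hv1' : u n - 1 < 0 := by linarith
    have hkey : f (u n) - 1 < (w-ε)*(u n - 1) :=
      (lt_div_iff_of_neg hv1').mp (by linarith : w - ε < (f (u n) - 1)/(u n - 1))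
    have hkey2 : (w-ε)*(1 - u n) < 1 - f (u n) := by
      have he : (w-ε)*(u n - 1) = -((w-ε)*(1 - u n)) := by ring
      rw [he] at hkey
      linarith
    have h1 : 1 - u n = (1-t)*q^n := by simp only [hu]; ring
    have h3 : (w-ε)*((1-t)*q^n)*2^n ≤ (1 - f (u n))*2^n := by
      apply mul_le_mul_of_nonneg_right _ (by positivity)
      rw [← h1]; linarith
    have h4 : (w-ε)*((1-t)*q^n)*(2:ℝ)^n = (w-ε)*(1-t)*(1-ε')^n := by
      rw [hq, div_pow, mul_comm]
      field_simp
    calc (w-ε)*(1-t)*(1-ε')^n = (w-ε)*((1-t)*q^n)*2^n := h4.symm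
      _ ≤ (1 - f (u n))*2^n := h3
      _ ≤ 1 - f t := hind n
  · simp [hf1]
  · -- case 1 < t : show f t - 1 ≤ w*(t-1)
    suffices hS : ∀ ε > (0:ℝ), f t - 1 ≤ (w+ε)*(t-1) by
      by_contra hcon
      push_neg at hcon
      have ht1 : 0 < t - 1 := by linarith
      set ε := (f t - 1 - w*(t-1))/(2*(t-1)) with hε
      have hε0 : 0 < ε := by
        apply div_pos _ (by linarith)
        nlinarith
      have hthis := hS ε hε0
      rw [hε] at hthis
      have hexp : (w + (f t - 1 - w*(t-1))/(2*(t-1)))*(t-1)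
          = w*(t-1) + (f t - 1 - w*(t-1))/2 := by
        field_simp
      rw [hexp] at hthis
      nlinarith
    intro ε hε
    obtain ⟨ρ, hρ0, hρ⟩ := slope_ctrl f w hd ε hε
    obtain ⟨n, hn⟩ := exists_pow_lt_of_lt_one (div_pos hρ0 (by linarith : (0:ℝ) < t - 1))
      (by norm_num : (3/4:ℝ) < 1)
    have hn' : (t-1) * (3/4:ℝ)^n < ρ := by
      have := (lt_div_iff₀' (by linarith : (0:ℝ) < t - 1)).mp hn
      linarith
    suffices hcl : ∀ ε' : ℝ, 0 < ε' → ε' ≤ 1/2 → f t - 1 ≤ (w+ε)*(t-1)*(1+ε')^n by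
      have hc : Continuous (fun ε' : ℝ => (w+ε)*(t-1)*(1+ε')^n) := by fun_prop
      have htend : Filter.Tendsto (fun ε' : ℝ => (w+ε)*(t-1)*(1+ε')^n)
          (nhdsWithin 0 (Set.Ioi 0)) (nhds ((w+ε)*(t-1))) := by
        have h0 : Filter.Tendsto (fun ε' : ℝ => (w+ε)*(t-1)*(1+ε')^n)
            (nhdsWithin 0 (Set.Ioi 0)) (nhds ((w+ε)*(t-1)*(1+(0:ℝ))^n)) :=
          (hc.tendsto 0).mono_left nhdsWithin_le_nhds
        simpa using h0
      have hev : ∀ᶠ ε' in nhdsWithin (0:ℝ) (Set.Ioi 0),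
          f t - 1 ≤ (w+ε)*(t-1)*(1+ε')^n := by
        apply Filter.eventually_of_mem (Ioc_mem_nhdsGT_of_mem
          (by norm_num : (0:ℝ) ∈ Set.Ico (0:ℝ) (1/2:ℝ)))
        exact fun ε' hε' => hcl ε' hε'.1 hε'.2
      exact ge_of_tendsto htend hev
    intro ε' hε'0 hε'half
    set q := (1+ε')/2 with hq
    have hq0 : 0 < q := by rw [hq]; linarith
    have hq34 : q ≤ 3/4 := by rw [hq]; linarith
    set u : ℕ → ℝ := fun k => 1 + (t-1)*q^k with hu
    have hposq : ∀ k : ℕ, 0 < (t-1)*q^k := fun k => mul_pos (by linarith) (pow_pos hq0 k)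
    have hu_gt1 : ∀ k, 1 < u k := fun k => by
      simp only [hu]; linarith [hposq k]
    have hstep : ∀ k, f (u k) - 1 ≤ (f (u (k+1)) - 1)*2 := by
      intro k
      have hδ : 0 < (u k - 1)*ε'/2 := by
        have := hu_gt1 k
        have h2 : 0 < u k - 1 := by linarith
        positivity
      have hh := ham 1 (u k) ((u k - 1)*ε'/2) one_pos (by linarith [hu_gt1 k]) hδ
      have harg : (1 + u k)/2 + (u k - 1)*ε'/2 = u (k+1) := by
        simp only [hu, pow_succ, hq]; ring
      rw [harg, hf1] at hh
      linarith
    have hind : ∀ k, f t - 1 ≤ (f (u k) - 1) * 2^k := by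
      intro k
      induction k with
      | zero =>
        have hu0 : u 0 = t := by simp only [hu, pow_zero]; ring
        rw [hu0]; norm_num
      | succ k ih =>
        calc f t - 1 ≤ (f (u k) - 1)*2^k := ih
          _ ≤ ((f (u (k+1)) - 1)*2)*2^k := by
              apply mul_le_mul_of_nonneg_right (hstep k) (by positivity)
          _ = (f (u (k+1)) - 1)*2^(k+1) := by rw [pow_succ]; ring
    have hv1 : 1 < u n := hu_gt1 n
    have hvdist : |u n - 1| < ρ := by
      have he : u n - 1 = (t-1)*q^n := by simp only [hu]; ring
      rw [he, abs_of_pos (hposq n)]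
      calc (t-1)*q^n ≤ (t-1)*(3/4:ℝ)^n := by
            apply mul_le_mul_of_nonneg_left (pow_le_pow_left₀ (le_of_lt hq0) hq34 n) (by linarith)
        _ < ρ := hn'
    have hslope := hρ (u n) (ne_of_gt hv1) hvdist
    rw [hf1] at hslope
    have habs := (abs_lt.mp hslope).2
    have hv1' : 0 < u n - 1 := by linarith
    have hkey : f (u n) - 1 < (w+ε)*(u n - 1) :=
      (div_lt_iff₀ hv1').mp (by linarith : (f (u n) - 1)/(u n - 1) < w + ε)
    have h1 : u n - 1 = (t-1)*q^n := by simp only [hu]; ring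
    have h3 : (f (u n) - 1)*2^n ≤ (w+ε)*((t-1)*q^n)*2^n := by
      apply mul_le_mul_of_nonneg_right _ (by positivity)
      rw [← h1]; linarith
    have h4 : (w+ε)*((t-1)*q^n)*(2:ℝ)^n = (w+ε)*(t-1)*(1+ε')^n := by
      rw [hq, div_pow, mul_comm]
      field_simp
    calc f t - 1 ≤ (f (u n) - 1)*2^n := hind n
      _ ≤ (w+ε)*((t-1)*q^n)*2^n := h3
      _ = (w+ε)*(t-1)*(1+ε')^n := h4

theorem stmt0 (Φ : ℝ → ℝ) (hmono : OperatorMonotoneOn' Φ) (hpos : ∀ t > (0:ℝ), 0 < Φ t)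
    (hΦ1 : Φ 1 = 1) (w : ℝ) (hw : w ∈ Set.Ioo (0:ℝ) 1) (hderiv : HasDerivAt Φ w 1) :
    ∀ t > (0:ℝ), ((1 - w) + w * t⁻¹)⁻¹ ≤ Φ t ∧ Φ t ≤ (1 - w) + w * t := by
  have ham := amean_of_OM Φ hmono
  have hupper := upper_bound Φ ham hΦ1 w hderiv
  have hgam : ∀ a b δ : ℝ, 0 < a → 0 < b → 0 < δ →
      ((Φ a⁻¹)⁻¹ + (Φ b⁻¹)⁻¹)/2 ≤ (Φ ((a+b)/2 + δ)⁻¹)⁻¹ := by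
    intro a b δ ha hb hδ
    set x := a⁻¹ with hx
    set y := b⁻¹ with hy
    set z := ((a+b)/2 + δ)⁻¹ with hz
    have hx0 : 0 < x := inv_pos.mpr ha
    have hy0 : 0 < y := inv_pos.mpr hb
    have hz0 : 0 < z := inv_pos.mpr (by linarith)
    have hH : 2*x*y/(x+y) = ((a+b)/2)⁻¹ := by
      rw [hx, hy]
      rw [inv_eq_one_div, inv_eq_one_div, inv_eq_one_div]
      rw [div_add_div _ _ (ne_of_gt ha) (ne_of_gt hb)]
      field_simp
      ring
    have hzH : z < 2*x*y/(x+y) := by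
      rw [hH, hz]
      apply inv_strictAnti₀ (by linarith) (by linarith)
    have hm := hmean_of_OM Φ hmono hpos x y z hx0 hy0 hz0 hzH
    have hΦx := hpos x hx0
    have hΦy := hpos y hy0
    have hΦz := hpos z hz0
    have hinv : (2*(Φ x * Φ y)/(Φ x + Φ y))⁻¹ ≤ (Φ z)⁻¹ :=
      inv_anti₀ hΦz hm
    have heq : (2*(Φ x * Φ y)/(Φ x + Φ y))⁻¹ = ((Φ x)⁻¹ + (Φ y)⁻¹)/2 := by
      field_simp
      ring
    rw [heq] at hinv
    exact hinv
  have hg1 : (Φ (1:ℝ)⁻¹)⁻¹ = 1 := by rw [inv_one, hΦ1, inv_one]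
  have hgd : HasDerivAt (fun s : ℝ => (Φ s⁻¹)⁻¹) w 1 := by
    have h1 : HasDerivAt (fun s : ℝ => s⁻¹) (-1) 1 := by
      have := hasDerivAt_inv (one_ne_zero : (1:ℝ) ≠ 0)
      simpa using this
    have h2 : HasDerivAt (fun s : ℝ => Φ s⁻¹) (w * -1) 1 := by
      have hΦ1' : HasDerivAt Φ w ((1:ℝ)⁻¹) := by rwa [inv_one]
      exact HasDerivAt.comp 1 hΦ1' h1
    have h3 := h2.inv (by rw [inv_one, hΦ1]; exact one_ne_zero)
    have : -(w * -1)/(Φ (1:ℝ)⁻¹)^2 = w := by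
      rw [inv_one, hΦ1]
      norm_num
    rwa [this] at h3
  have hglower := upper_bound (fun s : ℝ => (Φ s⁻¹)⁻¹) hgam hg1 w hgd
  intro t ht
  constructor
  · have h := hglower t⁻¹ (inv_pos.mpr ht)
    simp only [inv_inv] at h
    have hB : (0:ℝ) < (1 - w) + w * t⁻¹ := by
      have := hw.1; have := hw.2
      have : 0 < w * t⁻¹ := mul_pos hw.1 (inv_pos.mpr ht)
      nlinarith [hw.2]
    have heq : 1 + w*(t⁻¹ - 1) = (1 - w) + w * t⁻¹ := by ring
    rw [heq] at h
    have hfin := inv_anti₀ (inv_pos.mpr (hpos t ht)) h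
    rwa [inv_inv] at hfin
  · have h := hupper t ht
    have heq : 1 + w*(t - 1) = (1 - w) + w * t := by ring
    rwa [heq] at h
end

section
/- Let A and B be Hermitian matrices (of the same size), and let w ∈ (0,1). Then the limit as p → 0⁺ of ((1-w)·exp(pA) + w·exp(pB))^(1/p) equals exp((1-w)A + wB), in the matrix norm topology. -/
open Matrix NormedSpace Filter Topology
open scoped ComplexOrder

section Scoped
open scoped Matrix.Norms.L2Operator

noncomputable instance matCStarStmt3 {m : ℕ} : CStarAlgebra (Matrix (Fin m) (Fin m) ℂ) := { }

private lemma finContOnStmt3 {s : Set ℝ} (hs : s.Finite) (f : ℝ → ℝ) : ContinuousOn f s := by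
  have := hs.to_subtype
  rw [continuousOn_iff_continuous_restrict]
  exact continuous_of_discreteTopology

private lemma specContOnStmt3 {m : ℕ} (a : Matrix (Fin m) (Fin m) ℂ) (f : ℝ → ℝ) :
    ContinuousOn f (spectrum ℝ a) :=
  finContOnStmt3 Matrix.finite_real_spectrum f

private lemma specBoundStmt3 {m : ℕ} (a : Matrix (Fin m) (Fin m) ℂ) (ha : IsSelfAdjoint a)
    {x : ℝ} (hx : x ∈ spectrum ℝ a) : |x - 1| ≤ ‖a - 1‖ := by
  have h := norm_apply_le_norm_cfc (fun y : ℝ => y - 1) a hx (specContOnStmt3 a _) ha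
  have h2 : cfc (fun y : ℝ => y - 1) a = a - 1 := by
    rw [cfc_sub _ _ a (specContOnStmt3 a _) (specContOnStmt3 a _), cfc_id' ℝ a ha,
      cfc_const 1 a ha, _root_.map_one]
  rw [h2] at h
  simpa using h

private lemma logLinApproxStmt3 {t : ℝ} (ht : |t - 1| ≤ 1/2) :
    |Real.log t - (t - 1)| ≤ 2 * (t - 1)^2 := by
  have hx : |1 - t| < 1 := by rw [abs_sub_comm]; linarith
  have h := Real.abs_log_sub_add_sum_range_le hx 1
  rw [Finset.sum_range_one] at h
  norm_num at h
  have h1 : (1:ℝ)/2 ≤ 1 - |1 - t| := by rw [abs_sub_comm]; linarith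
  have e1 : |Real.log t - (t - 1)| = |1 - t + Real.log t| := by congr 1; ring
  have hsq : |1 - t|^2 = (t - 1)^2 := by rw [abs_sub_comm, sq_abs]
  have key : (1 - t)^2 / (1 - |1 - t|) ≤ 2 * (t - 1)^2 := by
    rw [div_le_iff₀ (by linarith : (0:ℝ) < 1 - |1 - t|)]
    nlinarith [sq_nonneg (t - 1), abs_nonneg (1 - t)]
  rw [e1]
  exact h.trans key

private lemma specPosStmt3 {m : ℕ} {a : Matrix (Fin m) (Fin m) ℂ} (ha : IsSelfAdjoint a)
    (hsm : ‖a - 1‖ ≤ 1/2) : ∀ x ∈ spectrum ℝ a, 0 < x := by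
  intro x hx
  have h := (specBoundStmt3 a ha hx).trans hsm
  have := abs_le.mp h
  linarith [this.1]

private lemma logEstStmt3 {m : ℕ} {a : Matrix (Fin m) (Fin m) ℂ} (ha : IsSelfAdjoint a)
    (hsm : ‖a - 1‖ ≤ 1/2) :
    ‖cfc Real.log a - (a - 1)‖ ≤ 2 * ‖a - 1‖^2 := by
  have hmain : cfc (fun x : ℝ => Real.log x - (x - 1)) a = cfc Real.log a - (a - 1) := by
    rw [cfc_sub _ _ a (specContOnStmt3 a _) (specContOnStmt3 a _)]
    congr 1
    rw [cfc_sub _ _ a (specContOnStmt3 a _) (specContOnStmt3 a _), cfc_id' ℝ a ha,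
      cfc_const 1 a ha, _root_.map_one]
  rw [← hmain]
  refine norm_cfc_le (by positivity) fun x hx => ?_
  have hb := specBoundStmt3 a ha hx
  have happrox := logLinApproxStmt3 (hb.trans hsm)
  rw [Real.norm_eq_abs]
  refine happrox.trans ?_
  have : (x - 1)^2 ≤ ‖a - 1‖^2 := by
    rw [← sq_abs]
    exact pow_le_pow_left₀ (abs_nonneg _) hb 2
  linarith

private lemma rpowEqStmt3 {m : ℕ} {a : Matrix (Fin m) (Fin m) ℂ} (ha : IsSelfAdjoint a)
    (hpos : ∀ x ∈ spectrum ℝ a, 0 < x) {p : ℝ} (hp : p ≠ 0) :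
    cfc (fun x : ℝ => x ^ (1/p)) a = exp (p⁻¹ • cfc Real.log a) := by
  have hsa2 : IsSelfAdjoint (p⁻¹ • cfc Real.log a) :=
    IsSelfAdjoint.smul (star_trivial _) (cfc_predicate Real.log a)
  calc cfc (fun x : ℝ => x ^ (1/p)) a
      = cfc (fun x : ℝ => Real.exp (p⁻¹ * Real.log x)) a := by
        refine cfc_congr fun x hx => ?_
        rw [Real.rpow_def_of_pos (hpos x hx), mul_comm, one_div]
    _ = cfc (Real.exp ∘ fun x : ℝ => p⁻¹ * Real.log x) a := rfl
    _ = cfc Real.exp (cfc (fun x : ℝ => p⁻¹ * Real.log x) a) :=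
        cfc_comp Real.exp _ a ha Real.continuous_exp.continuousOn (specContOnStmt3 a _)
    _ = cfc Real.exp (p⁻¹ • cfc Real.log a) := by
        rw [cfc_const_mul p⁻¹ Real.log a (specContOnStmt3 a _)]
    _ = exp (p⁻¹ • cfc Real.log a) := CFC.real_exp_eq_normedSpace_exp hsa2

private lemma keyStmt3 {m : ℕ} (A B : Matrix (Fin m) (Fin m) ℂ)
    (hA : A.IsHermitian) (hB : B.IsHermitian) (w : ℝ) (hw : w ∈ Set.Ioo (0:ℝ) 1) :
    Filter.Tendsto
      (fun p : ℝ =>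
        cfc (fun x : ℝ => x ^ (1 / p))
          ((1 - w) • cfc Real.exp (p • A) + w • cfc Real.exp (p • B)))
      (nhdsWithin 0 (Set.Ioi 0))
      (nhds (cfc Real.exp ((1 - w) • A + w • B))) := by
  letI : NormedAlgebra ℚ (Matrix (Fin m) (Fin m) ℂ) := .restrictScalars ℚ ℝ _
  have hsaA : IsSelfAdjoint A := hA.isSelfAdjoint
  have hsaB : IsSelfAdjoint B := hB.isSelfAdjoint
  set N : ℝ → Matrix (Fin m) (Fin m) ℂ :=
    fun p => (1 - w) • exp (p • A) + w • exp (p • B) with hN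
  have hsaPA : ∀ p : ℝ, IsSelfAdjoint (p • A) := fun p => IsSelfAdjoint.smul (star_trivial p) hsaA
  have hsaPB : ∀ p : ℝ, IsSelfAdjoint (p • B) := fun p => IsSelfAdjoint.smul (star_trivial p) hsaB
  have hgoalfun : ∀ p : ℝ,
      (1 - w) • cfc Real.exp (p • A) + w • cfc Real.exp (p • B) = N p := fun p => by
    rw [hN, CFC.real_exp_eq_normedSpace_exp (hsaPA p), CFC.real_exp_eq_normedSpace_exp (hsaPB p)]
  have hsaN : ∀ p : ℝ, IsSelfAdjoint (N p) := fun p => by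
    have : IsSelfAdjoint ((1 - w) • cfc Real.exp (p • A) + w • cfc Real.exp (p • B)) :=
      (IsSelfAdjoint.smul (star_trivial _) (cfc_predicate Real.exp (p • A))).add
        (IsSelfAdjoint.smul (star_trivial _) (cfc_predicate Real.exp (p • B)))
    rwa [hgoalfun p] at this
  have hC : IsSelfAdjoint ((1 - w) • A + w • B) :=
    (IsSelfAdjoint.smul (star_trivial _) hsaA).add (IsSelfAdjoint.smul (star_trivial _) hsaB)
  have hNcont : Continuous N := by
    have h1 : Continuous fun p : ℝ => exp (p • A) :=
      exp_continuous.comp (continuous_id.smul continuous_const)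
    have h2 : Continuous fun p : ℝ => exp (p • B) :=
      exp_continuous.comp (continuous_id.smul continuous_const)
    exact ((continuous_const (y := (1 - w : ℝ))).smul h1).add
      ((continuous_const (y := (w : ℝ))).smul h2)
  have hN0 : N 0 = 1 := by
    rw [hN]
    simp only [zero_smul, exp_zero]
    rw [← add_smul, sub_add_cancel, one_smul]
  have hderiv : HasDerivAt N ((1 - w) • A + w • B) 0 := by
    have h1 := hasDerivAt_exp_smul_const (𝕂 := ℝ) A 0
    have h2 := hasDerivAt_exp_smul_const (𝕂 := ℝ) B 0
    simp only [zero_smul, exp_zero, one_mul] at h1 h2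
    exact (h1.const_smul (1 - w)).add (h2.const_smul w)
  have hslope : Tendsto (fun p : ℝ => p⁻¹ • (N p - 1)) (𝓝[>] (0:ℝ))
      (𝓝 ((1 - w) • A + w • B)) := by
    have h := hasDerivAt_iff_tendsto_slope.mp hderiv
    have hsub : Set.Ioi (0:ℝ) ⊆ {(0:ℝ)}ᶜ := fun x hx => ne_of_gt hx
    refine (h.mono_left (nhdsWithin_mono _ hsub)).congr fun p => ?_
    rw [slope_def_module, hN0, sub_zero]
  have hsmall : ∀ᶠ p in 𝓝[>] (0:ℝ), ‖N p - 1‖ ≤ 1/2 := by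
    have h : Tendsto N (𝓝 0) (𝓝 1) := hN0 ▸ hNcont.tendsto 0
    have h2 := Metric.tendsto_nhds.mp h (1/2) (by norm_num)
    refine (h2.filter_mono nhdsWithin_le_nhds).mono fun p hp => ?_
    rw [dist_eq_norm] at hp
    linarith
  have herr : Tendsto (fun p : ℝ => p⁻¹ • cfc Real.log (N p) - p⁻¹ • (N p - 1))
      (𝓝[>] (0:ℝ)) (𝓝 0) := by
    have hbound : ∀ᶠ p in 𝓝[>] (0:ℝ),
        ‖p⁻¹ • cfc Real.log (N p) - p⁻¹ • (N p - 1)‖ ≤ (2 * p) * ‖p⁻¹ • (N p - 1)‖^2 := by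
      filter_upwards [hsmall, self_mem_nhdsWithin] with p hsm hp
      have hp0 : (0:ℝ) < p := hp
      have hinv : (0:ℝ) < p⁻¹ := inv_pos.mpr hp0
      rw [← smul_sub, norm_smul, Real.norm_eq_abs, abs_of_pos hinv]
      have hle := logEstStmt3 (hsaN p) hsm
      have hnorm : ‖N p - 1‖ = p * ‖p⁻¹ • (N p - 1)‖ := by
        rw [norm_smul, Real.norm_eq_abs, abs_of_pos hinv]
        field_simp
      calc p⁻¹ * ‖cfc Real.log (N p) - (N p - 1)‖
          ≤ p⁻¹ * (2 * ‖N p - 1‖^2) := mul_le_mul_of_nonneg_left hle (le_of_lt hinv)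
        _ = 2 * p * ‖p⁻¹ • (N p - 1)‖^2 := by
            rw [hnorm]
            field_simp
    have hg : Tendsto (fun p : ℝ => (2 * p) * ‖p⁻¹ • (N p - 1)‖^2) (𝓝[>] (0:ℝ)) (𝓝 0) := by
      have hmul : Tendsto (fun p : ℝ => (2 * p) * ‖p⁻¹ • (N p - 1)‖^2) (𝓝[>] (0:ℝ))
          (𝓝 ((2 * 0) * ‖(1 - w) • A + w • B‖^2)) := by
        refine Tendsto.mul ?_ (hslope.norm.pow 2)
        exact ((continuous_const.mul continuous_id).tendsto 0).mono_left nhdsWithin_le_nhds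
      simpa using hmul
    exact squeeze_zero_norm' hbound hg
  have hT : Tendsto (fun p : ℝ => p⁻¹ • cfc Real.log (N p)) (𝓝[>] (0:ℝ))
      (𝓝 ((1 - w) • A + w • B)) := by
    have h := herr.add hslope
    simpa using h
  have hfinal : Tendsto (fun p : ℝ => exp (p⁻¹ • cfc Real.log (N p))) (𝓝[>] (0:ℝ))
      (𝓝 (exp ((1 - w) • A + w • B))) := (exp_continuous.tendsto _).comp hT
  rw [show (nhdsWithin (0:ℝ) (Set.Ioi 0)) = 𝓝[>] (0:ℝ) from rfl,
    CFC.real_exp_eq_normedSpace_exp hC]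
  refine Tendsto.congr' ?_ hfinal
  filter_upwards [hsmall, self_mem_nhdsWithin] with p hsm hp
  rw [hgoalfun p, rpowEqStmt3 (hsaN p) (specPosStmt3 (hsaN p) hsm) (ne_of_gt (hp : (0:ℝ) < p))]

end Scoped

theorem stmt3 {m : ℕ} (A B : Matrix (Fin m) (Fin m) ℂ)
    (hA : A.IsHermitian) (hB : B.IsHermitian) (w : ℝ) (hw : w ∈ Set.Ioo (0:ℝ) 1) :
    Filter.Tendsto
      (fun p : ℝ =>
        cfc (fun x : ℝ => x ^ (1 / p))
          ((1 - w) • cfc Real.exp (p • A) + w • cfc Real.exp (p • B)))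
      (nhdsWithin 0 (Set.Ioi 0))
      (nhds (cfc Real.exp ((1 - w) • A + w • B))) :=
  keyStmt3 A B hA hB w hw
end

section
/- For positive definite matrices A₁,...,Aₙ and a probability vector ω with positive entries, log (Σᵢ wᵢ Aᵢ⁻¹)⁻¹ ≤ log 𝔊_E(ω;𝔸), where 𝔊_E(ω;𝔸) = exp(Σᵢ wᵢ log Aᵢ) is the log-Euclidean mean. -/
open Matrix
open scoped ComplexOrder

namespace Stmt13Aux

variable {m : ℕ}


lemma contOn' (C : Matrix (Fin m) (Fin m) ℂ) (f : ℝ → ℝ) : ContinuousOn f (spectrum ℝ C) :=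
  Set.Finite.continuousOn Matrix.finite_real_spectrum f

lemma posdef_smul {P : Matrix (Fin m) (Fin m) ℂ} (hP : P.PosDef) {r : ℝ} (hr : 0 < r) :
    (r • P).PosDef := by
  rw [posDef_iff_dotProduct_mulVec]
  constructor
  · have : (r • P)ᴴ = r • Pᴴ := by ext i j; simp [Complex.real_smul]
    rw [Matrix.IsHermitian, this, hP.1]
  · intro x hx
    have h := hP.dotProduct_mulVec_pos hx
    have : star x ⬝ᵥ ((r • P) *ᵥ x) = (r : ℂ) * (star x ⬝ᵥ (P *ᵥ x)) := by
      rw [smul_mulVec, dotProduct_smul]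
      simp [Complex.real_smul]
    rw [this]
    exact mul_pos (by exact_mod_cast hr) h

lemma possemidef_smul {P : Matrix (Fin m) (Fin m) ℂ} (hP : P.PosSemidef) {r : ℝ} (hr : 0 ≤ r) :
    (r • P).PosSemidef := by
  rw [posSemidef_iff_dotProduct_mulVec]
  constructor
  · have : (r • P)ᴴ = r • Pᴴ := by ext i j; simp [Complex.real_smul]
    rw [Matrix.IsHermitian, this, hP.1]
  · intro x
    have h := hP.dotProduct_mulVec_nonneg x
    have : star x ⬝ᵥ ((r • P) *ᵥ x) = (r : ℂ) * (star x ⬝ᵥ (P *ᵥ x)) := by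
      rw [smul_mulVec, dotProduct_smul]
      simp [Complex.real_smul]
    rw [this]
    exact mul_nonneg (by exact_mod_cast hr) h

lemma rep {B : Matrix (Fin m) (Fin m) ℂ} (hB : B.IsHermitian) (g : ℝ → ℝ) (x : Fin m → ℂ) :
    star x ⬝ᵥ (cfc g B *ᵥ x) =
      ((∑ j, g (hB.eigenvalues j) *
        Complex.normSq ((star (hB.eigenvectorUnitary : Matrix (Fin m) (Fin m) ℂ) *ᵥ x) j) : ℝ) : ℂ) := by
  rw [hB.cfc_eq, Matrix.IsHermitian.cfc, Unitary.conjStarAlgAut_apply]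
  set U : Matrix (Fin m) (Fin m) ℂ := (hB.eigenvectorUnitary : Matrix (Fin m) (Fin m) ℂ) with hU
  set y : Fin m → ℂ := star U *ᵥ x with hy
  set d : Fin m → ℂ := RCLike.ofReal ∘ g ∘ hB.eigenvalues with hd
  have h1 : (U * diagonal d * star U) *ᵥ x = U *ᵥ (diagonal d *ᵥ y) := by
    rw [hy, mulVec_mulVec, mulVec_mulVec, Matrix.mul_assoc]
  rw [h1, dotProduct_mulVec]
  have h2 : star x ᵥ* U = star y := by
    rw [hy, star_mulVec, star_eq_conjTranspose, conjTranspose_conjTranspose]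
  rw [h2]
  have h3 : star y ⬝ᵥ (diagonal d *ᵥ y) = ∑ j, star (y j) * (d j * y j) := by
    simp [dotProduct, mulVec_diagonal]
  rw [h3, Complex.ofReal_sum]
  refine Finset.sum_congr rfl fun j _ => ?_
  have : d j = ((g (hB.eigenvalues j) : ℝ) : ℂ) := by simp [hd]
  rw [this, Complex.ofReal_mul]
  rw [show ((Complex.normSq (y j) : ℝ) : ℂ) = star (y j) * y j by
    rw [Complex.star_def, Complex.normSq_eq_conj_mul_self]]
  ring

lemma spectrum_pos' {C : Matrix (Fin m) (Fin m) ℂ} (hC : C.PosDef) :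
    ∀ t ∈ spectrum ℝ C, 0 < t := by
  intro t ht
  rw [Matrix.IsHermitian.spectrum_real_eq_range_eigenvalues hC.1] at ht
  obtain ⟨i, rfl⟩ := ht
  exact hC.eigenvalues_pos i



lemma cfc_affine {C : Matrix (Fin m) (Fin m) ℂ} (hC : IsSelfAdjoint C) (a b : ℝ) :
    cfc (fun t : ℝ => a + b * t) C = a • (1 : Matrix (Fin m) (Fin m) ℂ) + b • C := by
  have h := cfc_add C (fun _ : ℝ => a) (fun t : ℝ => b * t) (contOn' C _) (contOn' C _)
  rw [h, cfc_const a C hC, cfc_const_mul b (fun t : ℝ => t) C (contOn' C _), cfc_id' ℝ C hC,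
    Algebra.algebraMap_eq_smul_one]

lemma cfc_resolvent {C : Matrix (Fin m) (Fin m) ℂ} (hC : C.PosDef) {s : ℝ}
    (hpos : ∀ t ∈ spectrum ℝ C, 0 < 1 - s + s * t) :
    cfc (fun t : ℝ => (1 - s + s * t)⁻¹) C
      = ((1 - s) • (1 : Matrix (Fin m) (Fin m) ℂ) + s • C)⁻¹ := by
  have hsa : IsSelfAdjoint C := hC.1.isSelfAdjoint
  have hmul : cfc (fun t : ℝ => (1 - s + s * t)⁻¹) C
      * ((1 - s) • (1 : Matrix (Fin m) (Fin m) ℂ) + s • C) = 1 := by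
    rw [← cfc_affine hsa (1 - s) s,
      ← cfc_mul (fun t : ℝ => (1 - s + s * t)⁻¹) (fun t => 1 - s + s * t) C
        (contOn' C _) (contOn' C _)]
    have : (spectrum ℝ C).EqOn (fun t => (1 - s + s * t)⁻¹ * (1 - s + s * t)) (fun _ => 1) :=
      fun t ht => by field_simp [(hpos t ht).ne']
    rw [cfc_congr this, cfc_const_one ℝ C hsa]
  exact (Matrix.inv_eq_left_inv hmul).symm

lemma cfc_inv_eq {C : Matrix (Fin m) (Fin m) ℂ} (hC : C.PosDef) :
    cfc (fun t : ℝ => t⁻¹) C = C⁻¹ := by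
  have hsa : IsSelfAdjoint C := hC.1.isSelfAdjoint
  have hmul : cfc (fun t : ℝ => t⁻¹) C * C = 1 := by
    have h := cfc_mul (fun t : ℝ => t⁻¹) (fun t : ℝ => t) C (contOn' C _) (contOn' C _)
    rw [cfc_id' ℝ C hsa] at h
    rw [← h]
    have : (spectrum ℝ C).EqOn (fun t => t⁻¹ * t) (fun _ => 1) :=
      fun t ht => by field_simp [(spectrum_pos' hC t ht).ne']
    rw [cfc_congr this, cfc_const_one ℝ C hsa]
  exact (Matrix.inv_eq_left_inv hmul).symm

lemma log_inv_eq {C : Matrix (Fin m) (Fin m) ℂ} (hC : C.PosDef) :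
    cfc Real.log C⁻¹ = - cfc Real.log C := by
  have hsa : IsSelfAdjoint C := hC.1.isSelfAdjoint
  rw [← cfc_inv_eq hC,
    ← cfc_comp' Real.log (fun t : ℝ => t⁻¹) C
      ((Matrix.finite_real_spectrum.image _).continuousOn Real.log) (contOn' C _) hsa]
  have : (fun t : ℝ => Real.log t⁻¹) = fun t : ℝ => - Real.log t :=
    funext fun t => Real.log_inv t
  rw [show (Real.log <| · ⁻¹) = fun t : ℝ => - Real.log t from this, cfc_neg Real.log C]

lemma log_exp_eq {X : Matrix (Fin m) (Fin m) ℂ} (hX : IsSelfAdjoint X) :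
    cfc Real.log (cfc Real.exp X) = X := by
  rw [← cfc_comp' Real.log Real.exp X
    ((Matrix.finite_real_spectrum.image _).continuousOn Real.log) (contOn' X _) hX]
  simp only [Real.log_exp]
  exact cfc_id' ℝ X hX

lemma quad_ineq {P : Matrix (Fin m) (Fin m) ℂ} (hP : P.PosDef) (x v : Fin m → ℂ) :
    2 * (star x ⬝ᵥ v).re ≤ (star v ⬝ᵥ (P *ᵥ v)).re + (star x ⬝ᵥ (P⁻¹ *ᵥ x)).re := by
  have hdet : IsUnit P.det := isUnit_iff_ne_zero.mpr hP.det_pos.ne'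
  have hPinv : (P⁻¹)ᴴ = P⁻¹ := hP.inv.1
  set u : Fin m → ℂ := P⁻¹ *ᵥ x with hu
  have h0 : 0 ≤ star (v - u) ⬝ᵥ (P *ᵥ (v - u)) := hP.posSemidef.dotProduct_mulVec_nonneg _
  have h0' : 0 ≤ (star (v - u) ⬝ᵥ (P *ᵥ (v - u))).re := by
    have := (Complex.le_def.mp h0).1
    simpa using this
  have hPu : P *ᵥ u = x := by
    rw [hu, mulVec_mulVec, mul_nonsing_inv P hdet, one_mulVec]
  have hstaru : star u = star x ᵥ* P⁻¹ := by
    rw [hu, star_mulVec, hPinv]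
  have e1 : star u ⬝ᵥ (P *ᵥ v) = star x ⬝ᵥ v := by
    rw [hstaru, ← dotProduct_mulVec, mulVec_mulVec, nonsing_inv_mul P hdet, one_mulVec]
  have e2 : star u ⬝ᵥ x = star x ⬝ᵥ (P⁻¹ *ᵥ x) := by
    rw [hstaru, ← dotProduct_mulVec]
  have e3 : (star v ⬝ᵥ x).re = (star x ⬝ᵥ v).re := by
    rw [star_dotProduct]; simp
  have expand : star (v - u) ⬝ᵥ (P *ᵥ (v - u))
      = star v ⬝ᵥ (P *ᵥ v) - star v ⬝ᵥ x - star x ⬝ᵥ v + star x ⬝ᵥ (P⁻¹ *ᵥ x) := by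
    rw [star_sub, mulVec_sub, hPu, sub_dotProduct, dotProduct_sub, dotProduct_sub,
      e1, e2]
    ring
  have := congrArg Complex.re expand
  simp only [Complex.sub_re, Complex.add_re] at this
  rw [this] at h0'
  linarith [e3]

lemma sum_mulVec' {n : ℕ} (A : Fin n → Matrix (Fin m) (Fin m) ℂ) (v : Fin m → ℂ) :
    (∑ i, A i) *ᵥ v = ∑ i, (A i *ᵥ v) := by
  ext j
  simp [mulVec, dotProduct, Matrix.sum_apply, Finset.sum_mul, Finset.sum_apply]
  rw [Finset.sum_comm]

lemma dp_sum {n : ℕ} (a : Fin m → ℂ) (f : Fin n → (Fin m → ℂ)) :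
    a ⬝ᵥ (∑ i, f i) = ∑ i, a ⬝ᵥ f i := by
  simp [dotProduct, Finset.sum_apply, Finset.mul_sum]
  rw [Finset.sum_comm]

lemma harm {n : ℕ} (C : Fin n → Matrix (Fin m) (Fin m) ℂ) (hC : ∀ i, (C i).PosDef)
    (w : Fin n → ℝ) (hw : ∀ i, 0 < w i) (hw1 : ∑ i, w i = 1)
    (hS : (∑ i, w i • C i).PosDef) (x : Fin m → ℂ) :
    (star x ⬝ᵥ ((∑ i, w i • C i)⁻¹ *ᵥ x)).re ≤ ∑ i, w i * (star x ⬝ᵥ ((C i)⁻¹ *ᵥ x)).re := by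
  set S : Matrix (Fin m) (Fin m) ℂ := ∑ i, w i • C i with hSdef
  have hdet : IsUnit S.det := isUnit_iff_ne_zero.mpr hS.det_pos.ne'
  set v : Fin m → ℂ := S⁻¹ *ᵥ x with hv
  have hSv : S *ᵥ v = x := by
    rw [hv, mulVec_mulVec, mul_nonsing_inv S hdet, one_mulVec]
  have key : ∀ i, w i * (2 * (star x ⬝ᵥ v).re)
      ≤ w i * ((star v ⬝ᵥ (C i *ᵥ v)).re + (star x ⬝ᵥ ((C i)⁻¹ *ᵥ x)).re) :=
    fun i => mul_le_mul_of_nonneg_left (quad_ineq (hC i) x v) (hw i).le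
  have hsum := Finset.sum_le_sum (s := Finset.univ) (fun i _ => key i)
  rw [← Finset.sum_mul, hw1, one_mul] at hsum
  have hSvv : ∑ i, w i * (star v ⬝ᵥ (C i *ᵥ v)).re = (star v ⬝ᵥ x).re := by
    rw [← hSv, hSdef, sum_mulVec', dp_sum, Complex.re_sum]
    refine Finset.sum_congr rfl fun i _ => ?_
    rw [smul_mulVec, dotProduct_smul, Complex.smul_re]
    rfl
  have e3 : (star v ⬝ᵥ x).re = (star x ⬝ᵥ v).re := by
    rw [star_dotProduct]; simp
  simp only [mul_add] at hsum
  rw [Finset.sum_add_distrib, hSvv, e3] at hsum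
  have : (star x ⬝ᵥ v).re ≤ ∑ i, w i * (star x ⬝ᵥ ((C i)⁻¹ *ᵥ x)).re := by linarith
  simpa [hv, Finset.mul_sum] using this

lemma denom_pos {l s : ℝ} (hl : 0 < l) (h0 : 0 ≤ s) (h1 : s ≤ 1) : 0 < 1 - s + s * l := by
  nlinarith [mul_nonneg h0 hl.le, mul_le_of_le_one_left (le_of_lt hl) h1]

lemma cont_integrand {l : ℝ} (hl : 0 < l) :
    ContinuousOn (fun s : ℝ => (l - 1) / (1 - s + s * l)) (Set.uIcc 0 1) := by
  apply ContinuousOn.div continuousOn_const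
  · fun_prop
  · intro s hs
    rw [Set.uIcc_of_le (by norm_num)] at hs
    exact (denom_pos hl hs.1 hs.2).ne'

lemma integral_log' {l : ℝ} (hl : 0 < l) :
    ∫ s in (0:ℝ)..1, (l - 1) / (1 - s + s * l) = Real.log l := by
  have hder : ∀ s ∈ Set.uIcc (0:ℝ) 1,
      HasDerivAt (fun s : ℝ => Real.log (1 - s + s * l)) ((l - 1) / (1 - s + s * l)) s := by
    intro s hs
    rw [Set.uIcc_of_le (by norm_num)] at hs
    have h1 : HasDerivAt (fun s : ℝ => 1 - s + s * l) (-1 + l) s := by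
      exact (((hasDerivAt_id' s).const_sub 1).add ((hasDerivAt_id' s).mul_const l)).congr_deriv (by ring)
    have := h1.log (denom_pos hl hs.1 hs.2).ne'
    convert this using 2
    ring
  have := intervalIntegral.integral_eq_sub_of_hasDerivAt hder
    ((cont_integrand hl).intervalIntegrable)
  rw [this]
  norm_num

-- assume previous lemmas: spectrum_pos', contOn', posdef_smul, possemidef_smul, denom_pos,
-- cfc_resolvent, sum_mulVec', dp_sum, harm
lemma cfc_fs {P : Matrix (Fin m) (Fin m) ℂ} (hP : P.PosDef) {s : ℝ}
    (hs0 : 0 < s) (hs1 : s ≤ 1) :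
    cfc (fun t : ℝ => (t - 1) / (1 - s + s * t)) P
      = s⁻¹ • (1 : Matrix (Fin m) (Fin m) ℂ) - s⁻¹ • ((1 - s) • 1 + s • P)⁻¹ := by
  have hsa : IsSelfAdjoint P := hP.1.isSelfAdjoint
  have hpos : ∀ t ∈ spectrum ℝ P, 0 < 1 - s + s * t :=
    fun t ht => denom_pos (spectrum_pos' hP t ht) hs0.le hs1
  have heq : (spectrum ℝ P).EqOn (fun t : ℝ => (t - 1) / (1 - s + s * t))
      (fun t : ℝ => s⁻¹ - s⁻¹ * (1 - s + s * t)⁻¹) := by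
    intro t ht
    have h := (hpos t ht).ne'
    have h' : 1 + t * s - s ≠ 0 := by rw [show 1 + t * s - s = 1 - s + s * t by ring]; exact h
    field_simp
    linear_combination (inv_mul_cancel₀ h' : (1 + t * s - s)⁻¹ * (1 + t * s - s) = 1)
  rw [cfc_congr heq,
    cfc_sub (fun _ : ℝ => s⁻¹) (fun t : ℝ => s⁻¹ * (1 - s + s * t)⁻¹) P
      (contOn' P _) (contOn' P _),
    cfc_const _ _ hsa, cfc_const_mul _ _ P (contOn' P _), cfc_resolvent hP hpos,
    Algebra.algebraMap_eq_smul_one]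

lemma posdef_aff {P : Matrix (Fin m) (Fin m) ℂ} (hP : P.PosDef) {s : ℝ}
    (hs0 : 0 < s) (hs1 : s ≤ 1) :
    ((1 - s) • (1 : Matrix (Fin m) (Fin m) ℂ) + s • P).PosDef :=
  Matrix.PosDef.posSemidef_add
    (possemidef_smul Matrix.PosSemidef.one (by linarith)) (posdef_smul hP hs0)

lemma re_smul_sub (x : Fin m → ℂ) (r : ℝ) (X : Matrix (Fin m) (Fin m) ℂ) :
    (star x ⬝ᵥ ((r • (1 : Matrix (Fin m) (Fin m) ℂ) - r • X) *ᵥ x)).re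
      = r * (star x ⬝ᵥ x).re - r * (star x ⬝ᵥ (X *ᵥ x)).re := by
  rw [sub_mulVec, dotProduct_sub, smul_mulVec, smul_mulVec, one_mulVec,
    dotProduct_smul, dotProduct_smul, Complex.sub_re, Complex.smul_re, Complex.smul_re]
  rfl

lemma stepA {n : ℕ} (B : Fin n → Matrix (Fin m) (Fin m) ℂ) (hB : ∀ i, (B i).PosDef)
    (w : Fin n → ℝ) (hw : ∀ i, 0 < w i) (hw1 : ∑ i, w i = 1)
    (hS : (∑ i, w i • B i).PosDef) (x : Fin m → ℂ) {s : ℝ} (hs0 : 0 < s) (hs1 : s ≤ 1) :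
    ∑ i, w i * (star x ⬝ᵥ (cfc (fun t : ℝ => (t - 1) / (1 - s + s * t)) (B i) *ᵥ x)).re
      ≤ (star x ⬝ᵥ (cfc (fun t : ℝ => (t - 1) / (1 - s + s * t)) (∑ i, w i • B i) *ᵥ x)).re := by
  set S : Matrix (Fin m) (Fin m) ℂ := ∑ i, w i • B i with hSdef
  have hsum_C : ∑ i, w i • ((1 - s) • (1 : Matrix (Fin m) (Fin m) ℂ) + s • B i)
      = (1 - s) • (1 : Matrix (Fin m) (Fin m) ℂ) + s • S := by
    rw [hSdef, Finset.smul_sum]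
    simp only [smul_add, smul_comm s]
    rw [Finset.sum_add_distrib, ← Finset.sum_smul, hw1, one_smul]
  have hCpos : ∀ i, ((1 - s) • (1 : Matrix (Fin m) (Fin m) ℂ) + s • B i).PosDef :=
    fun i => posdef_aff (hB i) hs0 hs1
  have hCS : ((1 - s) • (1 : Matrix (Fin m) (Fin m) ℂ) + s • S).PosDef :=
    posdef_aff hS hs0 hs1
  have hharm := harm _ hCpos w hw hw1 (hsum_C ▸ hCS) x
  rw [hsum_C] at hharm
  -- rewrite cfc's
  rw [cfc_fs hS hs0 hs1, re_smul_sub]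
  have hrw : ∀ i, (star x ⬝ᵥ (cfc (fun t : ℝ => (t - 1) / (1 - s + s * t)) (B i) *ᵥ x)).re
      = s⁻¹ * (star x ⬝ᵥ x).re
        - s⁻¹ * (star x ⬝ᵥ (((1 - s) • (1:Matrix (Fin m) (Fin m) ℂ) + s • B i)⁻¹ *ᵥ x)).re :=
    fun i => by rw [cfc_fs (hB i) hs0 hs1, re_smul_sub]
  simp only [hrw, mul_sub]
  rw [Finset.sum_sub_distrib, ← Finset.sum_mul, hw1, one_mul]
  have hsinv : (0:ℝ) ≤ s⁻¹ := (inv_nonneg).mpr hs0.le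
  have h2 : s⁻¹ * (star x ⬝ᵥ (((1 - s) • (1:Matrix (Fin m) (Fin m) ℂ) + s • S)⁻¹ *ᵥ x)).re
      ≤ ∑ i, w i * (s⁻¹ * (star x ⬝ᵥ (((1 - s) • (1:Matrix (Fin m) (Fin m) ℂ) + s • B i)⁻¹ *ᵥ x)).re) := by
    have := mul_le_mul_of_nonneg_left hharm hsinv
    rw [Finset.mul_sum] at this
    convert this using 2 with i
    · rfl
    ring
  linarith

lemma ii' {l : ℝ} (hl : 0 < l) (c : ℝ) :
    IntervalIntegrable (fun s : ℝ => (l - 1) / (1 - s + s * l) * c) MeasureTheory.volume 0 1 :=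
  (((cont_integrand hl).mul continuousOn_const)).intervalIntegrable

lemma integ_main {n m : ℕ} (μ : Fin m → ℝ) (d : Fin m → ℝ) (lam : Fin n → Fin m → ℝ)
    (c : Fin n → Fin m → ℝ) (w : Fin n → ℝ)
    (hμ : ∀ j, 0 < μ j) (hlam : ∀ i j, 0 < lam i j)
    (hcomp : ∀ s : ℝ, 0 < s → s ≤ 1 →
      ∑ i, w i * ∑ j, (lam i j - 1) / (1 - s + s * lam i j) * c i j
        ≤ ∑ j, (μ j - 1) / (1 - s + s * μ j) * d j) :
    ∑ i, w i * ∑ j, Real.log (lam i j) * c i j ≤ ∑ j, Real.log (μ j) * d j := by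
  have eqG : ∑ j, Real.log (μ j) * d j
      = ∫ s in (0:ℝ)..1, ∑ j, (μ j - 1) / (1 - s + s * μ j) * d j := by
    rw [intervalIntegral.integral_finset_sum (fun j _ => ii' (hμ j) (d j))]
    exact Finset.sum_congr rfl fun j _ => by
      rw [intervalIntegral.integral_mul_const, integral_log' (hμ j)]
  have eqQ : ∀ i, ∑ j, Real.log (lam i j) * c i j
      = ∫ s in (0:ℝ)..1, ∑ j, (lam i j - 1) / (1 - s + s * lam i j) * c i j := fun i => by
    rw [intervalIntegral.integral_finset_sum (fun j _ => ii' (hlam i j) (c i j))]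
    exact Finset.sum_congr rfl fun j _ => by
      rw [intervalIntegral.integral_mul_const, integral_log' (hlam i j)]
  have hiint : ∀ i, IntervalIntegrable
      (fun s : ℝ => ∑ j, (lam i j - 1) / (1 - s + s * lam i j) * c i j)
      MeasureTheory.volume 0 1 :=
    fun i => (continuousOn_finset_sum _ fun j _ =>
      (cont_integrand (hlam i j)).mul continuousOn_const).intervalIntegrable
  have eqF : ∑ i, w i * ∑ j, Real.log (lam i j) * c i j
      = ∫ s in (0:ℝ)..1, ∑ i, w i * ∑ j, (lam i j - 1) / (1 - s + s * lam i j) * c i j := by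
    rw [intervalIntegral.integral_finset_sum (fun i _ => (hiint i).const_mul (w i))]
    exact Finset.sum_congr rfl fun i _ => by
      rw [intervalIntegral.integral_const_mul, ← eqQ i]
  rw [eqG, eqF]
  have hG : IntervalIntegrable (fun s : ℝ => ∑ j, (μ j - 1) / (1 - s + s * μ j) * d j)
      MeasureTheory.volume 0 1 :=
    (continuousOn_finset_sum _ fun j _ =>
      (cont_integrand (hμ j)).mul continuousOn_const).intervalIntegrable
  have hF : IntervalIntegrable
      (fun s : ℝ => ∑ i, w i * ∑ j, (lam i j - 1) / (1 - s + s * lam i j) * c i j)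
      MeasureTheory.volume 0 1 :=
    (continuousOn_finset_sum _ fun i _ => continuousOn_const.mul
      (continuousOn_finset_sum _ fun j _ =>
        (cont_integrand (hlam i j)).mul continuousOn_const)).intervalIntegrable
  apply intervalIntegral.integral_mono_ae_restrict (by norm_num) hF hG
  have h0 : ∀ᵐ s : ℝ ∂MeasureTheory.volume, s ≠ 0 := by
    refine MeasureTheory.ae_iff.mpr ?_
    simpa using Real.volume_singleton
  filter_upwards [MeasureTheory.ae_restrict_of_ae h0,
    MeasureTheory.ae_restrict_mem measurableSet_Icc] with s hs0 hmem
  exact hcomp s (lt_of_le_of_ne hmem.1 (Ne.symm hs0)) hmem.2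

lemma posdef_sum {n : ℕ} [Nonempty (Fin n)] (C : Fin n → Matrix (Fin m) (Fin m) ℂ)
    (hC : ∀ i, (C i).PosDef) (w : Fin n → ℝ) (hw : ∀ i, 0 < w i) :
    (∑ i, w i • C i).PosDef := by
  rw [posDef_iff_dotProduct_mulVec]
  constructor
  · have h : ∀ i, (w i • C i).IsHermitian := fun i => (posdef_smul (hC i) (hw i)).1
    rw [Matrix.IsHermitian, conjTranspose_sum]
    exact Finset.sum_congr rfl fun i _ => h i
  · intro x hx
    rw [sum_mulVec', dp_sum]
    exact Finset.sum_pos (fun i _ => (posdef_smul (hC i) (hw i)).dotProduct_mulVec_pos hx) Finset.univ_nonempty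



set_option maxHeartbeats 2000000 in
lemma key {n : ℕ} (B : Fin n → Matrix (Fin m) (Fin m) ℂ) (hB : ∀ i, (B i).PosDef)
    (w : Fin n → ℝ) (hw : ∀ i, 0 < w i) (hw1 : ∑ i, w i = 1) :
    (cfc Real.log (∑ i, w i • B i) - ∑ i, w i • cfc Real.log (B i)).PosSemidef := by
  have hne : Nonempty (Fin n) := by
    by_contra h
    rw [not_nonempty_iff] at h
    rw [Finset.univ_eq_empty, Finset.sum_empty] at hw1
    norm_num at hw1
  have hS : (∑ i, w i • B i).PosDef := posdef_sum B hB w hw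
  set S : Matrix (Fin m) (Fin m) ℂ := ∑ i, w i • B i with hSdef
  rw [posSemidef_iff_dotProduct_mulVec]
  constructor
  · have h1 : IsSelfAdjoint (cfc Real.log S) := cfc_predicate Real.log S
    have h2 : ∀ i, IsSelfAdjoint (w i • cfc Real.log (B i)) := fun i => by
      exact IsSelfAdjoint.smul (star_trivial (w i)) (cfc_predicate Real.log (B i))
    have h3 : IsSelfAdjoint (∑ i, w i • cfc Real.log (B i)) := by
      rw [_root_.IsSelfAdjoint, star_sum]
      exact Finset.sum_congr rfl fun i _ => h2 i
    exact h1.sub h3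
  · intro x
    -- abbreviations
    set dS : Fin m → ℝ := fun j =>
      Complex.normSq ((star (hS.1.eigenvectorUnitary : Matrix (Fin m) (Fin m) ℂ) *ᵥ x) j) with hdS
    set dB : Fin n → Fin m → ℝ := fun i j =>
      Complex.normSq ((star ((hB i).1.eigenvectorUnitary : Matrix (Fin m) (Fin m) ℂ) *ᵥ x) j) with hdB
    have hμ : ∀ j, 0 < hS.1.eigenvalues j := hS.eigenvalues_pos
    have hlam : ∀ i j, 0 < (hB i).1.eigenvalues j := fun i => (hB i).eigenvalues_pos
    -- main real inequality
    have main : ∑ i, w i * (∑ j, Real.log ((hB i).1.eigenvalues j) * dB i j)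
        ≤ ∑ j, Real.log (hS.1.eigenvalues j) * dS j := by
      refine integ_main hS.1.eigenvalues dS (fun i => (hB i).1.eigenvalues) dB w hμ hlam ?_
      intro s hs0 hs1
      have h := stepA B hB w hw hw1 hS x hs0 hs1
      have hrepS := rep hS.1 (fun t : ℝ => (t - 1) / (1 - s + s * t)) x
      have hrepB := fun i => rep (hB i).1 (fun t : ℝ => (t - 1) / (1 - s + s * t)) x
      rw [hrepS] at h
      simp only [hrepB, Complex.ofReal_re] at h
      exact h
    -- assemble complex inequality
    have hexp : star x ⬝ᵥ ((cfc Real.log S - ∑ i, w i • cfc Real.log (B i)) *ᵥ x)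
        = (((∑ j, Real.log (hS.1.eigenvalues j) * dS j)
            - ∑ i, w i * (∑ j, Real.log ((hB i).1.eigenvalues j) * dB i j) : ℝ) : ℂ) := by
      rw [sub_mulVec, dotProduct_sub, sum_mulVec', dp_sum, rep hS.1 Real.log x]
      have : ∀ i, star x ⬝ᵥ ((w i • cfc Real.log (B i)) *ᵥ x)
          = ((w i * ∑ j, Real.log ((hB i).1.eigenvalues j) * dB i j : ℝ) : ℂ) := fun i => by
        rw [smul_mulVec, dotProduct_smul, rep (hB i).1 Real.log x]
        rw [Complex.real_smul, ← Complex.ofReal_mul]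
      simp only [this]
      push_cast
      ring
    rw [hexp]
    exact_mod_cast Complex.zero_le_real.mpr (by linarith [main])

end Stmt13Aux

open Stmt13Aux in
theorem stmt13 {n m : ℕ} (A : Fin n → Matrix (Fin m) (Fin m) ℂ)
    (hA : ∀ i, (A i).PosDef) (w : Fin n → ℝ) (hw : ∀ i, 0 < w i) (hw1 : ∑ i, w i = 1) :
    (cfc Real.log (cfc Real.exp (∑ i, w i • cfc Real.log (A i))) -
      cfc Real.log ((∑ i, w i • (A i)⁻¹)⁻¹)).PosSemidef := by
  have hne : Nonempty (Fin n) := by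
    by_contra h
    rw [not_nonempty_iff] at h
    rw [Finset.univ_eq_empty, Finset.sum_empty] at hw1
    norm_num at hw1
  have hAinv : ∀ i, (A i)⁻¹.PosDef := fun i => (hA i).inv
  have hS' : (∑ i, w i • (A i)⁻¹).PosDef := posdef_sum _ hAinv w hw
  have hXsa : IsSelfAdjoint (∑ i, w i • cfc Real.log (A i)) := by
    rw [_root_.IsSelfAdjoint, star_sum]
    exact Finset.sum_congr rfl fun i _ =>
      IsSelfAdjoint.smul (star_trivial (w i)) (cfc_predicate Real.log (A i))
  rw [log_exp_eq hXsa, log_inv_eq hS']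
  have hkey := key (fun i => (A i)⁻¹) hAinv w hw hw1
  have hrw : ∀ i, cfc Real.log ((A i)⁻¹) = - cfc Real.log (A i) :=
    fun i => log_inv_eq (hA i)
  have heq : (∑ i, w i • cfc Real.log (A i)) - - cfc Real.log (∑ i, w i • (A i)⁻¹)
      = cfc Real.log (∑ i, w i • (A i)⁻¹) - ∑ i, w i • cfc Real.log ((A i)⁻¹) := by
    simp only [hrw, smul_neg, Finset.sum_neg_distrib, sub_neg_eq_add]
    abel
  rw [heq]
  exact hkey
end

section
/- If A, B are positive definite matrices with log A ≤ log B, then ‖A‖ ≤ ‖B‖ (operator norm). Consequently, the log-Euclidean mean satisfies ‖(Σᵢ wᵢAᵢ⁻¹)⁻¹‖ ≤ ‖exp(Σᵢ wᵢ log Aᵢ)‖ ≤ ‖Σᵢ wᵢAᵢ‖ for positive definite A₁,...,Aₙ and any probability vector ω with positive entries. -/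
open Matrix
open scoped ComplexOrder

namespace Stmt14Aux

variable {m : ℕ} {A : Matrix (Fin m) (Fin m) ℂ}

lemma inner_toEuclideanCLM (M : Matrix (Fin m) (Fin m) ℂ) (x : EuclideanSpace ℂ (Fin m)) :
    (inner ℂ x (toEuclideanCLM (𝕜 := ℂ) M x) : ℂ) =
      dotProduct (star ((WithLp.equiv 2 _) x)) (M *ᵥ ((WithLp.equiv 2 _) x)) := by
  rw [EuclideanSpace.inner_eq_star_dotProduct, dotProduct_comm]; rfl

noncomputable def coeffs (hA : A.IsHermitian) (x : EuclideanSpace ℂ (Fin m)) (i : Fin m) : ℝ :=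
  ‖(star (hA.eigenvectorUnitary : Matrix (Fin m) (Fin m) ℂ) *ᵥ ((WithLp.equiv 2 _) x)) i‖ ^ 2

lemma coeffs_nonneg (hA : A.IsHermitian) (x : EuclideanSpace ℂ (Fin m)) (i : Fin m) :
    0 ≤ coeffs hA x i := by unfold coeffs; positivity

lemma inner_cfc (hA : A.IsHermitian) (f : ℝ → ℝ) (x : EuclideanSpace ℂ (Fin m)) :
    (inner ℂ x (toEuclideanCLM (𝕜 := ℂ) (cfc f A) x) : ℂ)
      = ((∑ i, coeffs hA x i * f (hA.eigenvalues i) : ℝ) : ℂ) := by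
  rw [inner_toEuclideanCLM, hA.cfc_eq, Matrix.IsHermitian.cfc, Unitary.conjStarAlgAut_apply]
  set U := (hA.eigenvectorUnitary : Matrix (Fin m) (Fin m) ℂ) with hU
  set v := ((WithLp.equiv 2 _) x) with hv
  set y := star U *ᵥ v with hy
  have hstar : star y = star v ᵥ* U := by
    rw [hy, star_mulVec, star_eq_conjTranspose, conjTranspose_conjTranspose]
  have h1 : star v ⬝ᵥ ((U * diagonal (RCLike.ofReal ∘ f ∘ hA.eigenvalues) * star U) *ᵥ v)
      = star y ⬝ᵥ (diagonal (RCLike.ofReal ∘ f ∘ hA.eigenvalues) *ᵥ y) := by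
    rw [hstar, hy, ← mulVec_mulVec, ← mulVec_mulVec, dotProduct_mulVec]
  rw [h1]
  rw [dotProduct]
  push_cast
  refine Finset.sum_congr rfl fun i _ => ?_
  rw [mulVec_diagonal]
  simp only [Function.comp_apply, Pi.star_apply, RCLike.star_def]
  rw [mul_left_comm, RCLike.conj_mul]
  have hc : coeffs hA x i = ‖y i‖ ^ 2 := rfl
  rw [hc]
  push_cast
  exact mul_comm _ _

lemma sum_coeffs (hA : A.IsHermitian) (x : EuclideanSpace ℂ (Fin m)) :
    ∑ i, coeffs hA x i = ‖x‖ ^ 2 := by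
  have h := inner_cfc hA (fun _ => 1) x
  have h1 : cfc (fun _ : ℝ => (1:ℝ)) A = 1 := cfc_const_one ℝ A hA
  rw [h1] at h
  simp only [mul_one] at h
  rw [_root_.map_one, ContinuousLinearMap.one_apply, inner_self_eq_norm_sq_to_K] at h
  rw [← RCLike.ofReal_pow] at h
  apply RCLike.ofReal_injective (K := ℂ)
  exact h.symm

lemma exists_unit (hA : A.IsHermitian) (i₀ : Fin m) :
    ∃ x : EuclideanSpace ℂ (Fin m), ‖x‖ = 1 ∧
      ∀ i, coeffs hA x i = if i = i₀ then 1 else 0 := by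
  refine ⟨hA.eigenvectorBasis i₀, hA.eigenvectorBasis.orthonormal.1 i₀, fun i => ?_⟩
  have hv : ((WithLp.equiv 2 _) (hA.eigenvectorBasis i₀)) = ⇑(hA.eigenvectorBasis i₀) := rfl
  unfold coeffs
  rw [hv, hA.star_eigenvectorUnitary_mulVec i₀]
  by_cases h : i = i₀ <;> simp [h, Pi.single_apply]


lemma norm_cfc_eq (hA : A.IsHermitian) (f : ℝ → ℝ) (i₀ : Fin m)
    (hmax : ∀ i, |f (hA.eigenvalues i)| ≤ |f (hA.eigenvalues i₀)|) :
    ‖toEuclideanCLM (𝕜 := ℂ) (cfc f A)‖ = |f (hA.eigenvalues i₀)| := by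
  have hherm : (cfc f A).IsHermitian := cfc_predicate f A
  have hsa : IsSelfAdjoint (toEuclideanCLM (𝕜 := ℂ) (cfc f A)) := by
    rw [_root_.IsSelfAdjoint, ← map_star]
    exact congrArg _ hherm
  have hspec : spectrum ℂ (toEuclideanCLM (𝕜 := ℂ) (cfc f A))
      = Set.range (fun i => ((f (hA.eigenvalues i) : ℝ) : ℂ)) := by
    rw [AlgEquiv.spectrum_eq (toEuclideanCLM (𝕜 := ℂ) (n := Fin m)) (cfc f A)]
    rw [hA.cfc_eq, Matrix.IsHermitian.cfc, Unitary.conjStarAlgAut_apply, Unitary.spectrum_star_right_conjugate,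
      spectrum_diagonal]
    rfl
  have hrad := hsa.spectralRadius_eq_nnnorm
  rw [spectralRadius, hspec] at hrad
  rw [iSup_range] at hrad
  have h2 : (⨆ i : Fin m, (‖((f (hA.eigenvalues i) : ℝ) : ℂ)‖₊ : ENNReal))
      = (‖((f (hA.eigenvalues i₀) : ℝ) : ℂ)‖₊ : ENNReal) := by
    apply le_antisymm
    · exact iSup_le fun i => by
        simp only [ENNReal.coe_le_coe, ← NNReal.coe_le_coe, coe_nnnorm, Complex.norm_real,
          Real.norm_eq_abs]
        exact hmax i
    · exact le_iSup (fun i => (‖((f (hA.eigenvalues i) : ℝ) : ℂ)‖₊ : ENNReal)) i₀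
  rw [h2] at hrad
  have h3 : ‖toEuclideanCLM (𝕜 := ℂ) (cfc f A)‖₊ = ‖((f (hA.eigenvalues i₀) : ℝ) : ℂ)‖₊ :=
    ENNReal.coe_injective hrad.symm
  calc ‖toEuclideanCLM (𝕜 := ℂ) (cfc f A)‖ = (‖toEuclideanCLM (𝕜 := ℂ) (cfc f A)‖₊ : ℝ) := rfl
    _ = ‖((f (hA.eigenvalues i₀) : ℝ) : ℂ)‖ := by rw [h3]; rfl
    _ = |f (hA.eigenvalues i₀)| := by rw [Complex.norm_real, Real.norm_eq_abs]


lemma inv_eq_cfc_inv {S : Matrix (Fin m) (Fin m) ℂ} (hS : S.PosDef) :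
    S⁻¹ = cfc (fun t : ℝ => t⁻¹) S := by
  have hu : IsUnit S := hS.isUnit
  have h := cfc_inv_id (R := ℝ) hu.unit (by rw [hu.unit_spec]; exact hS.1)
  rw [hu.unit_spec] at h
  rw [h, Matrix.coe_units_inv, hu.unit_spec]

lemma real_smul_matrix (r : ℝ) (M : Matrix (Fin m) (Fin m) ℂ) : r • M = (r : ℂ) • M := by
  ext i j
  simp [Matrix.smul_apply, Complex.real_smul]

lemma inner_sum_smul {n : ℕ} (M : Fin n → Matrix (Fin m) (Fin m) ℂ) (w : Fin n → ℝ)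
    (x : EuclideanSpace ℂ (Fin m)) :
    (inner ℂ x (toEuclideanCLM (𝕜 := ℂ) (∑ i, w i • M i) x) : ℂ)
      = ∑ i, (w i : ℂ) * inner ℂ x (toEuclideanCLM (𝕜 := ℂ) (M i) x) := by
  simp_rw [real_smul_matrix, map_sum, _root_.map_smul, ContinuousLinearMap.sum_apply,
    ContinuousLinearMap.smul_apply, inner_sum, inner_smul_right]

lemma posDef_sum_smul {n : ℕ} [Nonempty (Fin n)] (M : Fin n → Matrix (Fin m) (Fin m) ℂ)
    (w : Fin n → ℝ) (hM : ∀ i, (M i).PosDef) (hw : ∀ i, 0 < w i) :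
    (∑ i, w i • M i).PosDef := by
  refine posDef_iff_dotProduct_mulVec.mpr ⟨?_, ?_⟩
  · rw [Matrix.IsHermitian, conjTranspose_sum]
    refine Finset.sum_congr rfl fun i _ => ?_
    rw [conjTranspose_smul, star_trivial, (hM i).1]
  · intro v hv
    set x : EuclideanSpace ℂ (Fin m) := (WithLp.equiv 2 _).symm v with hx
    have hxv : (WithLp.equiv 2 _) x = v := rfl
    have h1 : star v ⬝ᵥ ((∑ i, w i • M i) *ᵥ v)
        = inner ℂ x (toEuclideanCLM (𝕜 := ℂ) (∑ i, w i • M i) x) := by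
      rw [inner_toEuclideanCLM, hxv]
    rw [h1, inner_sum_smul]
    apply Finset.sum_pos
    · intro i _
      apply mul_pos
      · exact_mod_cast Complex.zero_lt_real.mpr (hw i)
      · rw [inner_toEuclideanCLM, hxv]
        exact (hM i).dotProduct_mulVec_pos hv
    · exact Finset.univ_nonempty


lemma quad_le (hA : A.IsHermitian) (f : ℝ → ℝ) (x : EuclideanSpace ℂ (Fin m))
    (hx : ‖x‖ = 1) (c : ℝ) (hc : ∀ i, f (hA.eigenvalues i) ≤ c) :
    ∑ i, coeffs hA x i * f (hA.eigenvalues i) ≤ c := by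
  calc ∑ i, coeffs hA x i * f (hA.eigenvalues i)
      ≤ ∑ i, coeffs hA x i * c :=
        Finset.sum_le_sum fun i _ => mul_le_mul_of_nonneg_left (hc i) (coeffs_nonneg hA x i)
    _ = c := by rw [← Finset.sum_mul, sum_coeffs, hx]; simp

lemma le_quad (hA : A.IsHermitian) (f : ℝ → ℝ) (x : EuclideanSpace ℂ (Fin m))
    (hx : ‖x‖ = 1) (c : ℝ) (hc : ∀ i, c ≤ f (hA.eigenvalues i)) :
    c ≤ ∑ i, coeffs hA x i * f (hA.eigenvalues i) := by
  calc c = ∑ i, coeffs hA x i * c := by rw [← Finset.sum_mul, sum_coeffs, hx]; simp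
    _ ≤ ∑ i, coeffs hA x i * f (hA.eigenvalues i) :=
        Finset.sum_le_sum fun i _ => mul_le_mul_of_nonneg_left (hc i) (coeffs_nonneg hA x i)

lemma exp_sum_le {ι : Type*} [Fintype ι] (c s : ι → ℝ) (hc : ∀ i, 0 ≤ c i)
    (hsum : ∑ i, c i = 1) :
    Real.exp (∑ i, c i * s i) ≤ ∑ i, c i * Real.exp (s i) := by
  have h := convexOn_exp.map_sum_le (t := Finset.univ) (p := s) (fun i _ => hc i) hsum
    (fun i _ => Set.mem_univ (s i))
  simpa [smul_eq_mul] using h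

lemma sum_log_le {ι : Type*} [Fintype ι] (c s : ι → ℝ) (hc : ∀ i, 0 ≤ c i)
    (hsum : ∑ i, c i = 1) (hs : ∀ i, 0 < s i) :
    ∑ i, c i * Real.log (s i) ≤ Real.log (∑ i, c i * s i) := by
  have h := (strictConcaveOn_log_Ioi.concaveOn).le_map_sum (t := Finset.univ) (p := s)
    (fun i _ => hc i) hsum (fun i _ => hs i)
  simpa [smul_eq_mul] using h

lemma re_inner_le_norm_clm (T : EuclideanSpace ℂ (Fin m) →L[ℂ] EuclideanSpace ℂ (Fin m))
    (x : EuclideanSpace ℂ (Fin m)) (hx : ‖x‖ = 1) : (inner ℂ x (T x) : ℂ).re ≤ ‖T‖ := by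
  calc (inner ℂ x (T x) : ℂ).re ≤ ‖(inner ℂ x (T x) : ℂ)‖ := Complex.re_le_norm _
    _ ≤ ‖x‖ * ‖T x‖ := norm_inner_le_norm _ _
    _ ≤ ‖x‖ * (‖T‖ * ‖x‖) := by gcongr; exact T.le_opNorm x
    _ = ‖T‖ := by rw [hx]; ring

lemma quad_eigen (hA : A.IsHermitian) (f : ℝ → ℝ) (i₀ : Fin m)
    {x : EuclideanSpace ℂ (Fin m)} (hxc : ∀ i, coeffs hA x i = if i = i₀ then 1 else 0) :
    ∑ i, coeffs hA x i * f (hA.eigenvalues i) = f (hA.eigenvalues i₀) := by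
  simp only [hxc, ite_mul, one_mul, zero_mul]
  rw [Finset.sum_ite_eq' Finset.univ i₀ (fun i => f (hA.eigenvalues i))]
  simp

lemma quad_eigen_id (hA : A.IsHermitian) (i₀ : Fin m)
    {x : EuclideanSpace ℂ (Fin m)} (hxc : ∀ i, coeffs hA x i = if i = i₀ then 1 else 0) :
    ∑ i, coeffs hA x i * hA.eigenvalues i = hA.eigenvalues i₀ := by
  simpa using quad_eigen hA id i₀ hxc

lemma quad_le_id (hA : A.IsHermitian) (x : EuclideanSpace ℂ (Fin m)) (hx : ‖x‖ = 1)
    (c : ℝ) (hc : ∀ i, hA.eigenvalues i ≤ c) :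
    ∑ i, coeffs hA x i * hA.eigenvalues i ≤ c := by
  simpa using quad_le hA id x hx c hc

lemma part1 {m : ℕ} (A B : Matrix (Fin m) (Fin m) ℂ) (hA : A.PosDef) (hB : B.PosDef)
    (hAB : (cfc Real.log B - cfc Real.log A).PosSemidef) :
    ‖toEuclideanCLM (𝕜 := ℂ) A‖ ≤ ‖toEuclideanCLM (𝕜 := ℂ) B‖ := by
  rcases Nat.eq_zero_or_pos m with hm | hm
  · subst hm
    haveI : Subsingleton (Matrix (Fin 0) (Fin 0) ℂ) := ⟨fun a b => by ext i; exact i.elim0⟩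
    rw [Subsingleton.elim A B]
  haveI : Nonempty (Fin m) := Fin.pos_iff_nonempty.mp hm
  obtain ⟨i₀, hi₀⟩ := Finite.exists_max (fun i => hA.1.eigenvalues i)
  obtain ⟨j₀, hj₀⟩ := Finite.exists_max (fun i => hB.1.eigenvalues i)
  have hnA : ‖toEuclideanCLM (𝕜 := ℂ) A‖ = hA.1.eigenvalues i₀ := by
    have h := norm_cfc_eq hA.1 id i₀ (fun i => by
      simp only [id]
      rw [abs_of_pos (hA.eigenvalues_pos i), abs_of_pos (hA.eigenvalues_pos i₀)]
      exact hi₀ i)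
    have hid : cfc (id : ℝ → ℝ) A = A := cfc_id ℝ A hA.1
    rw [hid] at h
    simp only [id_eq] at h
    rw [h, abs_of_pos (hA.eigenvalues_pos i₀)]
  have hnB : ‖toEuclideanCLM (𝕜 := ℂ) B‖ = hB.1.eigenvalues j₀ := by
    have h := norm_cfc_eq hB.1 id j₀ (fun i => by
      simp only [id]
      rw [abs_of_pos (hB.eigenvalues_pos i), abs_of_pos (hB.eigenvalues_pos j₀)]
      exact hj₀ i)
    have hid : cfc (id : ℝ → ℝ) B = B := cfc_id ℝ B hB.1
    rw [hid] at h
    simp only [id_eq] at h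
    rw [h, abs_of_pos (hB.eigenvalues_pos j₀)]
  rw [hnA, hnB]
  obtain ⟨x, hx1, hxc⟩ := exists_unit hA.1 i₀
  have e1 : (inner ℂ x (toEuclideanCLM (𝕜 := ℂ) (cfc Real.log A) x) : ℂ).re
      = Real.log (hA.1.eigenvalues i₀) := by
    rw [inner_cfc hA.1 Real.log x, Complex.ofReal_re, quad_eigen hA.1 Real.log i₀ hxc]
  have e2 : (inner ℂ x (toEuclideanCLM (𝕜 := ℂ) (cfc Real.log A) x) : ℂ).re
      ≤ (inner ℂ x (toEuclideanCLM (𝕜 := ℂ) (cfc Real.log B) x) : ℂ).re := by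
    have h0 := hAB.dotProduct_mulVec_nonneg ((WithLp.equiv 2 _) x)
    have h1 : star ((WithLp.equiv 2 _) x) ⬝ᵥ ((cfc Real.log B - cfc Real.log A) *ᵥ
        ((WithLp.equiv 2 _) x)) = inner ℂ x (toEuclideanCLM (𝕜 := ℂ)
          (cfc Real.log B - cfc Real.log A) x) := (inner_toEuclideanCLM _ x).symm
    rw [h1, map_sub, ContinuousLinearMap.sub_apply, inner_sub_right] at h0
    have h2 := (Complex.le_def.mp h0).1
    simp only [Complex.zero_re, Complex.sub_re] at h2
    linarith
  have e3 : (inner ℂ x (toEuclideanCLM (𝕜 := ℂ) (cfc Real.log B) x) : ℂ).re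
      ≤ Real.log (hB.1.eigenvalues j₀) := by
    rw [inner_cfc hB.1 Real.log x, Complex.ofReal_re]
    exact quad_le hB.1 Real.log x hx1 _ fun i =>
      Real.log_le_log (hB.eigenvalues_pos i) (hj₀ i)
  have := e1 ▸ (e2.trans e3)
  exact (Real.log_le_log_iff (hA.eigenvalues_pos i₀) (hB.eigenvalues_pos j₀)).mp this


lemma re_inner_sum_smul {n : ℕ} (M : Fin n → Matrix (Fin m) (Fin m) ℂ) (w : Fin n → ℝ)
    (x : EuclideanSpace ℂ (Fin m)) :
    (inner ℂ x (toEuclideanCLM (𝕜 := ℂ) (∑ i, w i • M i) x) : ℂ).re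
      = ∑ i, w i * (inner ℂ x (toEuclideanCLM (𝕜 := ℂ) (M i) x) : ℂ).re := by
  rw [inner_sum_smul, Complex.re_sum]
  exact Finset.sum_congr rfl fun i _ => Complex.re_ofReal_mul _ _

lemma isHermitian_sum_smul {n : ℕ} (M : Fin n → Matrix (Fin m) (Fin m) ℂ) (w : Fin n → ℝ)
    (hM : ∀ i, (M i).IsHermitian) : (∑ i, w i • M i).IsHermitian := by
  rw [Matrix.IsHermitian, conjTranspose_sum]
  refine Finset.sum_congr rfl fun i _ => ?_
  rw [conjTranspose_smul, star_trivial, hM i]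

lemma part2 {n m : ℕ} (A : Fin n → Matrix (Fin m) (Fin m) ℂ) (w : Fin n → ℝ)
    (hA : ∀ i, (A i).PosDef) (hw : ∀ i, 0 < w i) (hsum : ∑ i, w i = 1) :
    ‖toEuclideanCLM (𝕜 := ℂ) (∑ i, w i • (A i)⁻¹)⁻¹‖ ≤
      ‖toEuclideanCLM (𝕜 := ℂ) (cfc Real.exp (∑ i, w i • cfc Real.log (A i)))‖ ∧
    ‖toEuclideanCLM (𝕜 := ℂ) (cfc Real.exp (∑ i, w i • cfc Real.log (A i)))‖ ≤
      ‖toEuclideanCLM (𝕜 := ℂ) (∑ i, w i • A i)‖ := by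
  haveI : Nonempty (Fin n) := by
    rcases Nat.eq_zero_or_pos n with h | h
    · subst h; simp at hsum
    · exact Fin.pos_iff_nonempty.mp h
  rcases Nat.eq_zero_or_pos m with hm | hm
  · subst hm
    haveI : Subsingleton (Matrix (Fin 0) (Fin 0) ℂ) := ⟨fun a b => by ext i; exact i.elim0⟩
    have key : ∀ X Y : Matrix (Fin 0) (Fin 0) ℂ,
        ‖toEuclideanCLM (𝕜 := ℂ) X‖ ≤ ‖toEuclideanCLM (𝕜 := ℂ) Y‖ := fun X Y => by
      rw [Subsingleton.elim X Y]
    exact ⟨key _ _, key _ _⟩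
  haveI : Nonempty (Fin m) := Fin.pos_iff_nonempty.mp hm
  -- Hermitian structure of M = ∑ wᵢ log Aᵢ
  have hMh : (∑ i, w i • cfc Real.log (A i)).IsHermitian :=
    isHermitian_sum_smul _ w fun i => cfc_predicate Real.log (A i)
  obtain ⟨k₀, hk₀⟩ := Finite.exists_max (fun i => hMh.eigenvalues i)
  -- norm of the log-Euclidean mean
  have hnG : ‖toEuclideanCLM (𝕜 := ℂ) (cfc Real.exp (∑ i, w i • cfc Real.log (A i)))‖
      = Real.exp (hMh.eigenvalues k₀) := by
    have h := norm_cfc_eq hMh Real.exp k₀ (fun i => by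
      rw [abs_of_pos (Real.exp_pos _), abs_of_pos (Real.exp_pos _)]
      exact Real.exp_le_exp.mpr (hk₀ i))
    rw [h, abs_of_pos (Real.exp_pos _)]
  -- generic facts for a unit vector x
  have hvne : ∀ x : EuclideanSpace ℂ (Fin m), ‖x‖ = 1 →
      (WithLp.equiv 2 (Fin m → ℂ)) x ≠ 0 := by
    intro x hx1 h
    have hx0 : x = 0 := by ext j; exact congrFun h j
    rw [hx0, norm_zero] at hx1
    exact one_ne_zero hx1.symm
  have hqA : ∀ (S : Matrix (Fin m) (Fin m) ℂ) (hS : S.IsHermitian)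
      (x : EuclideanSpace ℂ (Fin m)),
      (inner ℂ x (toEuclideanCLM (𝕜 := ℂ) S x) : ℂ).re
        = ∑ j, coeffs hS x j * hS.eigenvalues j := by
    intro S hS x
    have hid : cfc (id : ℝ → ℝ) S = S := cfc_id ℝ S hS
    conv_lhs => rw [← hid]
    rw [inner_cfc hS id x, Complex.ofReal_re]
    simp [id]
  have hre_log : ∀ (i : Fin n) (x : EuclideanSpace ℂ (Fin m)),
      (inner ℂ x (toEuclideanCLM (𝕜 := ℂ) (cfc Real.log (A i)) x) : ℂ).re
        = ∑ j, coeffs (hA i).1 x j * Real.log ((hA i).1.eigenvalues j) := fun i x => by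
    rw [inner_cfc (hA i).1 Real.log x, Complex.ofReal_re]
  have hsumc : ∀ (S : Matrix (Fin m) (Fin m) ℂ) (hS : S.IsHermitian)
      (x : EuclideanSpace ℂ (Fin m)), ‖x‖ = 1 → ∑ j, coeffs hS x j = 1 := by
    intro S hS x hx1
    rw [sum_coeffs hS x, hx1]; norm_num
  constructor
  · -- harmonic ≤ log-Euclidean
    have hS : (∑ i, w i • (A i)⁻¹).PosDef :=
      posDef_sum_smul _ w (fun i => (hA i).inv) hw
    obtain ⟨j₀, hj₀⟩ := Finite.exists_min (fun i => hS.1.eigenvalues i)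
    have hnH : ‖toEuclideanCLM (𝕜 := ℂ) (∑ i, w i • (A i)⁻¹)⁻¹‖
        = (hS.1.eigenvalues j₀)⁻¹ := by
      have hinv : (∑ i, w i • (A i)⁻¹)⁻¹ = cfc (fun t : ℝ => t⁻¹) (∑ i, w i • (A i)⁻¹) :=
        inv_eq_cfc_inv hS
      rw [hinv]
      have h := norm_cfc_eq hS.1 (fun t : ℝ => t⁻¹) j₀ (fun i => by
        rw [abs_of_pos (inv_pos.mpr (hS.eigenvalues_pos i)),
          abs_of_pos (inv_pos.mpr (hS.eigenvalues_pos j₀))]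
        exact inv_anti₀ (hS.eigenvalues_pos j₀) (hj₀ i))
      rw [h, abs_of_pos (inv_pos.mpr (hS.eigenvalues_pos j₀))]
    rw [hnH, hnG]
    obtain ⟨x, hx1, hxc⟩ := exists_unit hS.1 j₀
    -- eigenvalue at j₀ as quadratic form
    have e0 : hS.1.eigenvalues j₀
        = (inner ℂ x (toEuclideanCLM (𝕜 := ℂ) (∑ i, w i • (A i)⁻¹) x) : ℂ).re := by
      rw [hqA _ hS.1 x, quad_eigen_id hS.1 j₀ hxc]
    -- lower bound for each inverse term
    have e1 : ∀ i, Real.exp (-(inner ℂ x (toEuclideanCLM (𝕜 := ℂ)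
          (cfc Real.log (A i)) x) : ℂ).re)
        ≤ (inner ℂ x (toEuclideanCLM (𝕜 := ℂ) (A i)⁻¹ x) : ℂ).re := by
      intro i
      have hinv : (A i)⁻¹ = cfc (fun t : ℝ => t⁻¹) (A i) := inv_eq_cfc_inv (hA i)
      rw [hre_log i x, hinv, inner_cfc (hA i).1 (fun t : ℝ => t⁻¹) x, Complex.ofReal_re]
      have heq : ∀ j, ((hA i).1.eigenvalues j)⁻¹
          = Real.exp (-(Real.log ((hA i).1.eigenvalues j))) := fun j => by
        rw [Real.exp_neg, Real.exp_log ((hA i).eigenvalues_pos j)]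
      calc Real.exp (-(∑ j, coeffs (hA i).1 x j * Real.log ((hA i).1.eigenvalues j)))
          = Real.exp (∑ j, coeffs (hA i).1 x j * (-(Real.log ((hA i).1.eigenvalues j)))) := by
            rw [← Finset.sum_neg_distrib]
            congr 1
            exact Finset.sum_congr rfl fun j _ => by ring
        _ ≤ ∑ j, coeffs (hA i).1 x j * Real.exp (-(Real.log ((hA i).1.eigenvalues j))) :=
            exp_sum_le _ _ (coeffs_nonneg _ x) (hsumc _ (hA i).1 x hx1)
        _ = ∑ j, coeffs (hA i).1 x j * ((hA i).1.eigenvalues j)⁻¹ :=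
            Finset.sum_congr rfl fun j _ => by rw [heq j]
    -- combine with convexity over i
    have e2 : Real.exp (-(hMh.eigenvalues k₀)) ≤ hS.1.eigenvalues j₀ := by
      have hMle : (inner ℂ x (toEuclideanCLM (𝕜 := ℂ)
            (∑ i, w i • cfc Real.log (A i)) x) : ℂ).re ≤ hMh.eigenvalues k₀ := by
        rw [hqA _ hMh x]
        exact quad_le_id hMh x hx1 _ (fun i => hk₀ i)
      have hdec := re_inner_sum_smul (fun i => cfc Real.log (A i)) w x
      have hdec2 := re_inner_sum_smul (fun i => (A i)⁻¹) w x
      calc Real.exp (-(hMh.eigenvalues k₀))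
          ≤ Real.exp (-(inner ℂ x (toEuclideanCLM (𝕜 := ℂ)
              (∑ i, w i • cfc Real.log (A i)) x) : ℂ).re) := by
            apply Real.exp_le_exp.mpr; linarith
        _ = Real.exp (∑ i, w i * (-(inner ℂ x (toEuclideanCLM (𝕜 := ℂ)
              (cfc Real.log (A i)) x) : ℂ).re)) := by
            rw [hdec, ← Finset.sum_neg_distrib]
            congr 1
            exact Finset.sum_congr rfl fun i _ => by ring
        _ ≤ ∑ i, w i * Real.exp (-(inner ℂ x (toEuclideanCLM (𝕜 := ℂ)
              (cfc Real.log (A i)) x) : ℂ).re) :=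
            exp_sum_le _ _ (fun i => (hw i).le) hsum
        _ ≤ ∑ i, w i * (inner ℂ x (toEuclideanCLM (𝕜 := ℂ) (A i)⁻¹ x) : ℂ).re :=
            Finset.sum_le_sum fun i _ => mul_le_mul_of_nonneg_left (e1 i) (hw i).le
        _ = (inner ℂ x (toEuclideanCLM (𝕜 := ℂ) (∑ i, w i • (A i)⁻¹) x) : ℂ).re := hdec2.symm
        _ = hS.1.eigenvalues j₀ := e0.symm
    calc (hS.1.eigenvalues j₀)⁻¹
        ≤ (Real.exp (-(hMh.eigenvalues k₀)))⁻¹ :=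
          inv_anti₀ (Real.exp_pos _) e2
      _ = Real.exp (hMh.eigenvalues k₀) := by rw [Real.exp_neg, inv_inv]
  · -- log-Euclidean ≤ arithmetic
    rw [hnG]
    obtain ⟨x, hx1, hxc⟩ := exists_unit hMh k₀
    have hvx := hvne x hx1
    have ht_pos : ∀ i, 0 < (inner ℂ x (toEuclideanCLM (𝕜 := ℂ) (A i) x) : ℂ).re := by
      intro i
      rw [inner_toEuclideanCLM]
      exact (Complex.lt_def.mp ((hA i).dotProduct_mulVec_pos hvx)).1
    have hjensen : ∀ i, (inner ℂ x (toEuclideanCLM (𝕜 := ℂ) (cfc Real.log (A i)) x) : ℂ).re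
        ≤ Real.log ((inner ℂ x (toEuclideanCLM (𝕜 := ℂ) (A i) x) : ℂ).re) := by
      intro i
      rw [hre_log i x, hqA _ (hA i).1 x]
      exact sum_log_le _ _ (coeffs_nonneg _ x) (hsumc _ (hA i).1 x hx1)
        (fun j => (hA i).eigenvalues_pos j)
    have hMx : hMh.eigenvalues k₀
        = ∑ i, w i * (inner ℂ x (toEuclideanCLM (𝕜 := ℂ) (cfc Real.log (A i)) x) : ℂ).re := by
      rw [← re_inner_sum_smul (fun i => cfc Real.log (A i)) w x, hqA _ hMh x,
        quad_eigen_id hMh k₀ hxc]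
    have hchain : Real.exp (hMh.eigenvalues k₀)
        ≤ (inner ℂ x (toEuclideanCLM (𝕜 := ℂ) (∑ i, w i • A i) x) : ℂ).re := by
      calc Real.exp (hMh.eigenvalues k₀)
          ≤ Real.exp (∑ i, w i * Real.log ((inner ℂ x (toEuclideanCLM (𝕜 := ℂ)
              (A i) x) : ℂ).re)) := by
            apply Real.exp_le_exp.mpr
            rw [hMx]
            exact Finset.sum_le_sum fun i _ =>
              mul_le_mul_of_nonneg_left (hjensen i) (hw i).le
        _ ≤ ∑ i, w i * Real.exp (Real.log ((inner ℂ x (toEuclideanCLM (𝕜 := ℂ)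
              (A i) x) : ℂ).re)) := exp_sum_le _ _ (fun i => (hw i).le) hsum
        _ = ∑ i, w i * (inner ℂ x (toEuclideanCLM (𝕜 := ℂ) (A i) x) : ℂ).re :=
            Finset.sum_congr rfl fun i _ => by rw [Real.exp_log (ht_pos i)]
        _ = (inner ℂ x (toEuclideanCLM (𝕜 := ℂ) (∑ i, w i • A i) x) : ℂ).re :=
            (re_inner_sum_smul A w x).symm
    exact hchain.trans (re_inner_le_norm_clm _ x hx1)

end Stmt14Aux


theorem stmt14 :
    (∀ (m : ℕ) (A B : Matrix (Fin m) (Fin m) ℂ), A.PosDef → B.PosDef →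
      (cfc Real.log B - cfc Real.log A).PosSemidef →
      ‖Matrix.toEuclideanCLM (𝕜 := ℂ) A‖ ≤ ‖Matrix.toEuclideanCLM (𝕜 := ℂ) B‖) ∧
    (∀ (n m : ℕ) (A : Fin n → Matrix (Fin m) (Fin m) ℂ) (w : Fin n → ℝ),
      (∀ i, (A i).PosDef) → (∀ i, 0 < w i) → ∑ i, w i = 1 →
      ‖Matrix.toEuclideanCLM (𝕜 := ℂ) (∑ i, w i • (A i)⁻¹)⁻¹‖ ≤
        ‖Matrix.toEuclideanCLM (𝕜 := ℂ) (cfc Real.exp (∑ i, w i • cfc Real.log (A i)))‖ ∧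
      ‖Matrix.toEuclideanCLM (𝕜 := ℂ) (cfc Real.exp (∑ i, w i • cfc Real.log (A i)))‖ ≤
        ‖Matrix.toEuclideanCLM (𝕜 := ℂ) (∑ i, w i • A i)‖) := by
  exact ⟨fun m A B hA hB h => Stmt14Aux.part1 A B hA hB h,
    fun n m A w hA hw hsum => Stmt14Aux.part2 A w hA hw hsum⟩
end

section
/- For a probability measure μ on a set Ω and a μ-integrable family ω ↦ X(ω) of positive definite matrices, the operator Jensen inequality (∫ X(ω)⁻¹ dμ(ω))⁻¹ ≤ ∫ X(ω) dμ(ω) holds. -/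
open Matrix MeasureTheory
open scoped ComplexOrder

section Aux

variable {Ω : Type*} [MeasureTheory.MeasureSpace Ω] (μ : MeasureTheory.Measure Ω)

lemma aux_integrable_quadform {n : Type*} [Fintype n] (M : Ω → Matrix n n ℂ)
    (hM : ∀ i j, Integrable (fun ω => M ω i j) μ) (x : n → ℂ) :
    Integrable (fun ω => star x ⬝ᵥ (M ω) *ᵥ x) μ := by
  simp only [dotProduct, mulVec, Pi.star_apply]
  refine integrable_finset_sum _ fun i _ => ?_
  exact (integrable_finset_sum _ fun j _ => (hM i j).mul_const (x j)).const_mul _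

lemma aux_integral_quadform {n : Type*} [Fintype n] (M : Ω → Matrix n n ℂ)
    (hM : ∀ i j, Integrable (fun ω => M ω i j) μ) (x : n → ℂ) :
    star x ⬝ᵥ ((Matrix.of fun i j => ∫ ω, M ω i j ∂μ) : Matrix n n ℂ) *ᵥ x
      = ∫ ω, star x ⬝ᵥ (M ω) *ᵥ x ∂μ := by
  simp only [dotProduct, mulVec, Pi.star_apply, Matrix.of_apply, Finset.mul_sum]
  rw [integral_finset_sum _ fun i _ => ?_]
  · refine Finset.sum_congr rfl fun i _ => ?_
    rw [integral_finset_sum _ fun j _ => ((hM i j).mul_const (x j)).const_mul _]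
    refine Finset.sum_congr rfl fun j _ => ?_
    rw [integral_const_mul, integral_mul_const]
  · exact integrable_finset_sum _ fun j _ => ((hM i j).mul_const (x j)).const_mul _

lemma aux_integral_nonneg {f : Ω → ℂ} (hf : Integrable f μ) (h : ∀ ω, 0 ≤ f ω) :
    0 ≤ ∫ ω, f ω ∂μ := by
  rw [Complex.le_def]
  constructor
  · have hre := integral_re (𝕜 := ℂ) hf
    simp only [RCLike.re_to_complex] at hre
    rw [Complex.zero_re, ← hre]
    exact integral_nonneg fun ω => (Complex.le_def.mp (h ω)).1
  · have him := integral_im (𝕜 := ℂ) hf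
    simp only [RCLike.im_to_complex] at him
    rw [Complex.zero_im, ← him]
    simp only [fun ω => ((Complex.le_def.mp (h ω)).2).symm]
    simp

lemma aux_integral_pos [MeasureTheory.IsProbabilityMeasure μ]
    {f : Ω → ℂ} (hf : Integrable f μ) (h : ∀ ω, 0 < f ω) :
    0 < ∫ ω, f ω ∂μ := by
  rw [Complex.lt_def]
  constructor
  · have hre := integral_re (𝕜 := ℂ) hf
    simp only [RCLike.re_to_complex] at hre
    rw [Complex.zero_re, ← hre]
    rw [integral_pos_iff_support_of_nonneg
        (fun ω => le_of_lt (Complex.lt_def.mp (h ω)).1) hf.re]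
    have : Function.support (fun ω => (f ω).re) = Set.univ := by
      refine Set.eq_univ_of_forall fun ω => ?_
      have h0 := (Complex.lt_def.mp (h ω)).1
      simp only [Complex.zero_re] at h0
      exact h0.ne'
    rw [this]
    simp
  · have him := integral_im (𝕜 := ℂ) hf
    simp only [RCLike.im_to_complex] at him
    rw [Complex.zero_im, ← him]
    simp only [fun ω => ((Complex.lt_def.mp (h ω)).2).symm]
    simp

end Aux

theorem stmt17 {m : ℕ} {Ω : Type*} [MeasureTheory.MeasureSpace Ω]
    (μ : MeasureTheory.Measure Ω) [MeasureTheory.IsProbabilityMeasure μ]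
    (X : Ω → Matrix (Fin m) (Fin m) ℂ) (hX : ∀ ω, (X ω).PosDef)
    (hint : ∀ i j : Fin m, MeasureTheory.Integrable (fun ω => X ω i j) μ)
    (hint' : ∀ i j : Fin m, MeasureTheory.Integrable (fun ω => (X ω)⁻¹ i j) μ) :
    (Matrix.of (fun i j : Fin m => ∫ ω, X ω i j ∂μ) -
      (Matrix.of (fun i j : Fin m => ∫ ω, (X ω)⁻¹ i j ∂μ))⁻¹).PosSemidef := by
  set A : Matrix (Fin m) (Fin m) ℂ := Matrix.of (fun i j : Fin m => ∫ ω, X ω i j ∂μ) with hA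
  set B : Matrix (Fin m) (Fin m) ℂ := Matrix.of (fun i j : Fin m => ∫ ω, (X ω)⁻¹ i j ∂μ) with hB
  have hXinv : ∀ ω, ((X ω)⁻¹).PosDef := fun ω => (hX ω).inv
  have hAherm : A.IsHermitian := by
    ext i j
    simp only [conjTranspose_apply, hA, Matrix.of_apply]
    rw [Complex.star_def, ← integral_conj]
    congr 1
    ext ω
    exact congrFun (congrFun (hX ω).1 i) j
  have hBherm : B.IsHermitian := by
    ext i j
    simp only [conjTranspose_apply, hB, Matrix.of_apply]
    rw [Complex.star_def, ← integral_conj]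
    congr 1
    ext ω
    exact congrFun (congrFun (hXinv ω).1 i) j
  have hBpd : B.PosDef := by
    refine PosDef.of_dotProduct_mulVec_pos hBherm fun x hx => ?_
    rw [hB, aux_integral_quadform μ _ hint']
    exact aux_integral_pos μ (aux_integrable_quadform μ _ hint' x)
      (fun ω => (hXinv ω).dotProduct_mulVec_pos hx)
  haveI : Invertible B := hBpd.isUnit.invertible
  -- the block matrix integrand is PSD pointwise
  have hblockω : ∀ ω, (fromBlocks (X ω) (1 : Matrix (Fin m) (Fin m) ℂ) 1 (X ω)⁻¹).PosSemidef := by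
    intro ω
    haveI : Invertible ((X ω)⁻¹) := (hXinv ω).isUnit.invertible
    have h2 := (PosDef.fromBlocks₂₂ (X ω) (1 : Matrix (Fin m) (Fin m) ℂ) (hXinv ω)).mpr
    rw [conjTranspose_one] at h2
    apply h2
    rw [Matrix.nonsing_inv_nonsing_inv _ ((Matrix.isUnit_iff_isUnit_det _).mp (hX ω).isUnit),
      one_mul, mul_one, sub_self]
    exact Matrix.PosSemidef.zero
  -- entries of the block integrand are integrable
  set M : Ω → Matrix (Fin m ⊕ Fin m) (Fin m ⊕ Fin m) ℂ :=
    fun ω => fromBlocks (X ω) (1 : Matrix (Fin m) (Fin m) ℂ) 1 (X ω)⁻¹ with hM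
  have hMint : ∀ i j, Integrable (fun ω => M ω i j) μ := by
    rintro (i | i) (j | j)
    · exact hint i j
    · exact integrable_const _
    · exact integrable_const _
    · exact hint' i j
  have hkey : fromBlocks A (1 : Matrix (Fin m) (Fin m) ℂ) 1 B
      = Matrix.of fun i j => ∫ ω, M ω i j ∂μ := by
    ext (i | i) (j | j) <;>
      simp [hM, fromBlocks, hA, hB, MeasureTheory.integral_const]
  have hblock : (fromBlocks A (1 : Matrix (Fin m) (Fin m) ℂ) 1 B).PosSemidef := by
    refine PosSemidef.of_dotProduct_mulVec_nonneg (IsHermitian.fromBlocks hAherm (by simp) hBherm) fun x => ?_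
    rw [hkey, aux_integral_quadform μ _ hMint]
    exact aux_integral_nonneg μ (aux_integrable_quadform μ _ hMint x)
      (fun ω => (hblockω ω).dotProduct_mulVec_nonneg x)
  have hfin := (PosDef.fromBlocks₂₂ A (1 : Matrix (Fin m) (Fin m) ℂ) hBpd).mp
  rw [conjTranspose_one] at hfin
  have := hfin hblock
  simpa using this
end
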